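/- arXiv:1208.5521 — 7 statements merged into one kernel-verified Lean document; each statement's English description precedes it below -/
import Mathlib

section
/- If a metric space X has strong measure zero, then for every Hausdorff function h the h-dimensional Hausdorff measure of X is zero. -/
open Set Filter MeasureTheory ENNReal
open Topology

/-- A Hausdorff (gauge) function: nondecreasing, right-continuous on `[0,∞)`,
vanishing exactly at `0`. -/
def IsHausdorffFn (h : ℝ → ℝ) : Prop :=
  (∀ r, 0 ≤ r → 0 ≤ h r) ∧ MonotoneOn h (Set.Ici 0) ∧
  (∀ r, 0 ≤ r → ContinuousWithinAt h (Set.Ici r) r) ∧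
  ∀ r, 0 ≤ r → (h r = 0 ↔ r = 0)

/-- The `h`-dimensional Hausdorff measure associated to a gauge function `h`. -/
noncomputable def hMeas (h : ℝ → ℝ) {X : Type*} [EMetricSpace X] [MeasurableSpace X]
    [BorelSpace X] : Measure X :=
  Measure.mkMetric (fun r => ENNReal.ofReal (h r.toReal))

/-- Strong measure zero. -/
def SMZ (X : Type*) [MetricSpace X] : Prop :=
  ∀ ε : ℕ → ℝ, (∀ n, 0 < ε n) →
    ∃ U : ℕ → Set X, (∀ x, ∃ n, x ∈ U n) ∧ ∀ n, EMetric.diam (U n) ≤ ENNReal.ofReal (ε n)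

/-- For a Hausdorff function `h` and any `t > 0`, `δ > 0`, there is `0 < s < δ` with
`h s ≤ t`. -/
lemma exists_small_gauge {h : ℝ → ℝ} (hh : IsHausdorffFn h) {t δ : ℝ} (ht : 0 < t)
    (hδ : 0 < δ) : ∃ s : ℝ, 0 < s ∧ s < δ ∧ h s ≤ t := by
  obtain ⟨_, hmono, hcont, hzero⟩ := hh
  have h0 : h 0 = 0 := (hzero 0 le_rfl).mpr rfl
  have hc : Tendsto h (𝓝[>] (0:ℝ)) (𝓝 0) := by
    have := (hcont 0 le_rfl)
    rw [ContinuousWithinAt, h0] at this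
    exact this.mono_left (nhdsWithin_mono _ (Set.Ioi_subset_Ici le_rfl))
  have h1 : ∀ᶠ s in 𝓝[>] (0:ℝ), h s < t := hc.eventually (eventually_lt_nhds ht)
  have h2 : ∀ᶠ s in 𝓝[>] (0:ℝ), s < δ :=
    eventually_nhdsWithin_of_eventually_nhds (eventually_lt_nhds hδ)
  have h3 : ∀ᶠ s in 𝓝[>] (0:ℝ), 0 < s := self_mem_nhdsWithin
  obtain ⟨s, hs1, hs2, hs3⟩ := (h1.and (h2.and h3)).exists
  exact ⟨s, hs3, hs2, hs1.le⟩

/-- If a metric space has strong measure zero, then every gauged Hausdorff measure of it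
vanishes. -/
theorem stmt0 {X : Type*} [MetricSpace X] [MeasurableSpace X] [BorelSpace X]
    (hX : SMZ X) (h : ℝ → ℝ) (hh : IsHausdorffFn h) :
    hMeas h (Set.univ : Set X) = 0 := by
  refine le_antisymm ?_ zero_le
  refine ENNReal.le_of_forall_pos_le_add fun c hc _ => ?_
  rw [zero_add]
  have hcR : (0:ℝ) < (c:ℝ) := hc
  rw [hMeas, Measure.mkMetric_apply]
  refine iSup₂_le fun r hr => ?_
  -- choose δ > 0 with ofReal δ ≤ r
  set δ : ℝ := if r = ∞ then 1 else r.toReal with hδdef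
  have hδpos : 0 < δ := by
    rw [hδdef]
    split_ifs with hrt
    · exact one_pos
    · exact ENNReal.toReal_pos hr.ne' hrt
  have hδle : ENNReal.ofReal δ ≤ r := by
    rw [hδdef]
    split_ifs with hrt
    · simp [hrt]
    · rw [ENNReal.ofReal_toReal hrt]
  -- choose the sequence ε n with h (ε n) ≤ c / 2 / 2 ^ n
  have hchoice : ∀ n : ℕ, ∃ s : ℝ, 0 < s ∧ s < δ ∧ h s ≤ (c:ℝ) / 2 / 2 ^ n := fun n =>
    exists_small_gauge hh (by positivity) hδpos
  choose ε hεpos hεδ hεh using hchoice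
  obtain ⟨U, hUcov, hUdiam⟩ := hX ε hεpos
  have hcov : (Set.univ : Set X) ⊆ ⋃ n, U n := fun x _ => Set.mem_iUnion.2 (hUcov x)
  have hdiam : ∀ n, EMetric.diam (U n) ≤ r := fun n =>
    (hUdiam n).trans ((ENNReal.ofReal_le_ofReal (hεδ n).le).trans hδle)
  refine le_trans (iInf₂_le_of_le U hcov (iInf_le _ hdiam)) ?_
  · have key : ∀ n, (⨆ _ : (U n).Nonempty, ENNReal.ofReal (h (EMetric.diam (U n)).toReal))
        ≤ ENNReal.ofReal ((c:ℝ) / 2 / 2 ^ n) := by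
      intro n
      refine iSup_le fun _ => ?_
      refine le_trans (ENNReal.ofReal_le_ofReal ?_) (ENNReal.ofReal_le_ofReal (hεh n))
      have hd : (EMetric.diam (U n)).toReal ≤ ε n :=
        ENNReal.toReal_le_of_le_ofReal (hεpos n).le (hUdiam n)
      exact hh.2.1 ENNReal.toReal_nonneg (hεpos n).le hd
    calc ∑' n, ⨆ _ : (U n).Nonempty, ENNReal.ofReal (h (EMetric.diam (U n)).toReal)
        ≤ ∑' n, ENNReal.ofReal ((c:ℝ) / 2 / 2 ^ n) := ENNReal.tsum_le_tsum key
      _ = ENNReal.ofReal (∑' n, (c:ℝ) / 2 / 2 ^ n) :=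
          (ENNReal.ofReal_tsum_of_nonneg (fun n => by positivity)
            (summable_geometric_two' _)).symm
      _ = c := by rw [tsum_geometric_two', ENNReal.ofReal_coe_nnreal]
end

section
/- If for every Hausdorff function h the h-dimensional Hausdorff measure of a metric space X is finite, then X has strong measure zero. -/
open Set Filter MeasureTheory ENNReal

/- ### Auxiliary material -/

private lemma auxpow (M : ℕ) : ∀ i : ℕ, M * (2 * i + 2) ≤ 2 ^ (M + i + 1) := by
  intro i
  induction i with
  | zero =>
    have hM : M ≤ 2 ^ M := (Nat.lt_two_pow_self (n := M)).le
    calc M * (2 * 0 + 2) = M * 2 := by ring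
      _ ≤ 2 ^ M * 2 := Nat.mul_le_mul_right 2 hM
      _ = 2 ^ (M + 0 + 1) := by rw [pow_succ]
  | succ i ih =>
    have hM : M * 2 ≤ 2 ^ (M + i + 1) := by
      calc M * 2 ≤ 2 ^ M * 2 := Nat.mul_le_mul_right 2 (Nat.lt_two_pow_self (n := M)).le
        _ = 2 ^ (M + 1) := by rw [pow_succ]
        _ ≤ 2 ^ (M + i + 1) := Nat.pow_le_pow_right (by norm_num) (by omega)
    calc M * (2 * (i + 1) + 2) = M * (2 * i + 2) + M * 2 := by ring
      _ ≤ 2 ^ (M + i + 1) + 2 ^ (M + i + 1) := Nat.add_le_add ih hM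
      _ = 2 ^ (M + (i + 1) + 1) := by
          rw [show M + (i + 1) + 1 = (M + i + 1) + 1 by omega, pow_succ]; ring

/-- The level index of `r` relative to the scale sequence `e ∘ (2 ^ ·)`. -/
private noncomputable def auxJ (e : ℕ → ℝ) (r : ℝ) : ℕ :=
  sInf {i : ℕ | e (2 ^ (i + 1)) ≤ r}

/-- A step gauge function taking value `1/(j+1)` at level `j`. -/
private noncomputable def auxg (e : ℕ → ℝ) (r : ℝ) : ℝ :=
  if r ≤ 0 then 0 else ((auxJ e r : ℝ) + 1)⁻¹

section auxg

variable {e : ℕ → ℝ} (hpos : ∀ n, 0 < e n) (hanti : Antitone e)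
  (hsmall : ∀ r : ℝ, 0 < r → ∃ n, e n < r)

include hanti hsmall in
private lemma auxJ_mem {r : ℝ} (hr : 0 < r) : e (2 ^ (auxJ e r + 1)) ≤ r := by
  have hne : {i : ℕ | e (2 ^ (i + 1)) ≤ r}.Nonempty := by
    obtain ⟨n, hn⟩ := hsmall r hr
    exact ⟨n, le_trans (hanti ((Nat.lt_two_pow_self (n := n)).le.trans
      (Nat.pow_le_pow_right (by norm_num) (Nat.le_succ n)))) hn.le⟩
  exact (Nat.sInf_mem hne : _ ∈ {i : ℕ | e (2 ^ (i + 1)) ≤ r})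

private lemma auxJ_le {r : ℝ} {j : ℕ} (h : e (2 ^ (j + 1)) ≤ r) : auxJ e r ≤ j :=
  Nat.sInf_le h

private lemma auxJ_lt {r : ℝ} {i : ℕ} (h : i < auxJ e r) : r < e (2 ^ (i + 1)) :=
  lt_of_not_ge (Nat.notMem_of_lt_sInf h)

private lemma auxg_nonneg (r : ℝ) : 0 ≤ auxg e r := by
  unfold auxg; split
  · exact le_refl 0
  · positivity

private lemma auxg_of_pos {r : ℝ} (hr : 0 < r) : auxg e r = ((auxJ e r : ℝ) + 1)⁻¹ := by
  unfold auxg; rw [if_neg (not_le.2 hr)]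

include hanti hsmall in
private lemma auxg_mono : MonotoneOn (auxg e) (Set.Ici 0) := by
  intro a _ b hb hab
  rcases le_or_gt a 0 with ha0 | ha0
  · rw [show auxg e a = 0 from if_pos ha0]
    exact auxg_nonneg b
  · have hb0 : 0 < b := lt_of_lt_of_le ha0 hab
    rw [auxg_of_pos ha0, auxg_of_pos hb0]
    have hJ : auxJ e b ≤ auxJ e a :=
      auxJ_le (le_trans (auxJ_mem hanti hsmall ha0) hab)
    apply inv_anti₀ (by positivity)
    exact_mod_cast Nat.add_le_add_right hJ 1

include hpos hanti hsmall in
private lemma auxg_isHausdorffFn : IsHausdorffFn (auxg e) := by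
  refine ⟨fun r _ => auxg_nonneg r, auxg_mono hanti hsmall, ?_, ?_⟩
  · intro r hr
    rcases eq_or_lt_of_le hr with hr0 | hr0
    · -- continuity at 0 within Ici 0
      have hg0 : auxg e 0 = 0 := if_pos le_rfl
      rw [ContinuousWithinAt, ← hr0, hg0]
      rw [Metric.tendsto_nhdsWithin_nhds]
      intro δ hδ
      obtain ⟨m, hm⟩ := exists_nat_one_div_lt hδ
      refine ⟨e (2 ^ (m + 1)), hpos _, ?_⟩
      intro x hx hxd
      rw [Real.dist_eq, sub_zero] at hxd ⊢
      rcases le_or_gt x 0 with hx0 | hx0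
      · rw [show auxg e x = 0 from if_pos hx0, abs_zero]; exact hδ
      · have hxe : x < e (2 ^ (m + 1)) := lt_of_le_of_lt (le_abs_self x) hxd
        have hJx : m < auxJ e x := by
          by_contra hc
          push_neg at hc
          have h1 : e (2 ^ (m + 1)) ≤ e (2 ^ (auxJ e x + 1)) :=
            hanti (Nat.pow_le_pow_right (by norm_num) (by omega))
          exact absurd (le_trans h1 (auxJ_mem hanti hsmall hx0)) (not_le.2 hxe)
        rw [auxg_of_pos hx0, abs_of_nonneg (by positivity)]
        calc ((auxJ e x : ℝ) + 1)⁻¹ ≤ ((m : ℝ) + 1)⁻¹ := by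
              apply inv_anti₀ (by positivity)
              have : (m : ℝ) + 1 ≤ (auxJ e x : ℝ) := by exact_mod_cast hJx
              linarith
          _ = 1 / ((m : ℝ) + 1) := (one_div _).symm
          _ < δ := hm
    · -- continuity at r > 0 : locally constant on the right
      have key : ∃ t, r < t ∧ ∀ s, r ≤ s → s < t → auxJ e s = auxJ e r := by
        rcases Nat.eq_zero_or_pos (auxJ e r) with hJ0 | hJ0
        · refine ⟨r + 1, by linarith, fun s hs _ => ?_⟩
          have h1 : e (2 ^ (auxJ e r + 1)) ≤ r := auxJ_mem hanti hsmall hr0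
          have h2 : auxJ e s ≤ auxJ e r := auxJ_le (le_trans h1 hs)
          omega
        · refine ⟨e (2 ^ (auxJ e r)), ?_, ?_⟩
          · have := auxJ_lt (e := e) (r := r) (i := auxJ e r - 1) (by omega)
            rwa [show auxJ e r - 1 + 1 = auxJ e r by omega] at this
          · intro s hs hst
            have hs0 : 0 < s := lt_of_lt_of_le hr0 hs
            have hle : auxJ e s ≤ auxJ e r :=
              auxJ_le (le_trans (auxJ_mem hanti hsmall hr0) hs)
            have hge : auxJ e r ≤ auxJ e s := by
              by_contra hc
              push_neg at hc
              have h1 : e (2 ^ (auxJ e r)) ≤ e (2 ^ (auxJ e s + 1)) :=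
                hanti (Nat.pow_le_pow_right (by norm_num) (by omega))
              exact absurd (le_trans h1 (auxJ_mem hanti hsmall hs0)) (not_le.2 hst)
            omega
      obtain ⟨t, hrt, ht⟩ := key
      have hev : auxg e =ᶠ[nhdsWithin r (Set.Ici r)] fun _ => auxg e r := by
        filter_upwards [Ico_mem_nhdsGE hrt] with s hs
        rw [auxg_of_pos (lt_of_lt_of_le hr0 hs.1), auxg_of_pos hr0, ht s hs.1 hs.2]
      rw [ContinuousWithinAt]
      exact Filter.Tendsto.congr' hev.symm tendsto_const_nhds
  · intro r hr
    constructor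
    · intro h
      by_contra hne
      have hr0 : 0 < r := lt_of_le_of_ne hr (Ne.symm hne)
      rw [auxg_of_pos hr0] at h
      have : (0:ℝ) < ((auxJ e r : ℝ) + 1)⁻¹ := by positivity
      linarith
    · intro h; rw [h]; exact if_pos le_rfl

end auxg

private lemma filter_card_lt {G : Finset ℕ} {k k' : ℕ} (hk : k ∈ G) (h : k < k') :
    (G.filter (fun m => m < k)).card < (G.filter (fun m => m < k')).card := by
  apply Finset.card_lt_card
  constructor
  · intro m hm
    simp only [Finset.mem_filter] at hm ⊢
    exact ⟨hm.1, hm.2.trans h⟩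
  · intro hsub
    have : k ∈ G.filter (fun m => m < k) := hsub (by simp [hk, h])
    simp at this

/-- If every gauged Hausdorff measure of `X` is finite, then `X` has strong measure zero. -/
theorem stmt1 {X : Type*} [MetricSpace X] [MeasurableSpace X] [BorelSpace X]
    (hfin : ∀ h : ℝ → ℝ, IsHausdorffFn h → hMeas h (Set.univ : Set X) < ⊤) :
    SMZ X := by
  classical
  intro ε hε
  -- the shrunken scale sequence
  set ε' : ℕ → ℝ := fun n => (2:ℝ)⁻¹ ^ n * ((Finset.range (2*n+2)).inf'
    (Finset.nonempty_range_iff.2 (by omega)) ε) with hε'def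
  have hinfpos : ∀ n, 0 < (Finset.range (2*n+2)).inf'
      (Finset.nonempty_range_iff.2 (by omega)) ε := by
    intro n
    rw [Finset.lt_inf'_iff]
    exact fun b _ => hε b
  have hε'pos : ∀ n, 0 < ε' n := fun n => mul_pos (by positivity) (hinfpos n)
  have hε'anti : Antitone ε' := by
    intro m n hmn
    apply mul_le_mul
    · exact pow_le_pow_of_le_one (by norm_num) (by norm_num) hmn
    · exact Finset.inf'_mono ε (Finset.range_subset_range.2 (by omega)) _
    · exact (hinfpos n).le
    · positivity
  have hε'le : ∀ m, ε' m ≤ ε (2*m) := by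
    intro m
    calc ε' m ≤ 1 * ((Finset.range (2*m+2)).inf'
          (Finset.nonempty_range_iff.2 (by omega)) ε) := by
          apply mul_le_mul_of_nonneg_right _ (hinfpos m).le
          exact pow_le_one₀ (by norm_num) (by norm_num)
      _ = _ := one_mul _
      _ ≤ ε (2*m) := Finset.inf'_le ε (Finset.mem_range.2 (by omega))
  have hε'small : ∀ r : ℝ, 0 < r → ∃ n, ε' n < r := by
    intro r hr
    obtain ⟨n, hn⟩ := exists_pow_lt_of_lt_one (div_pos hr (hε 0)) (show (2:ℝ)⁻¹ < 1 by norm_num)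
    refine ⟨n, ?_⟩
    have h1 : ε' n ≤ (2:ℝ)⁻¹ ^ n * ε 0 := by
      apply mul_le_mul_of_nonneg_left _ (by positivity)
      exact Finset.inf'_le ε (Finset.mem_range.2 (by omega))
    calc ε' n ≤ (2:ℝ)⁻¹ ^ n * ε 0 := h1
      _ < (r / ε 0) * ε 0 := by
          apply mul_lt_mul_of_pos_right hn (hε 0)
      _ = r := div_mul_cancel₀ r (hε 0).ne'
  -- the gauge
  have hHg : IsHausdorffFn (auxg ε') := auxg_isHausdorffFn hε'pos hε'anti hε'small
  have hC : hMeas (auxg ε') (Set.univ : Set X) < ⊤ := hfin _ hHg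
  set A : ℝ≥0∞ := hMeas (auxg ε') (Set.univ : Set X) + 1 with hAdef
  have hAtop : A ≠ ⊤ := ENNReal.add_ne_top.2 ⟨hC.ne, ENNReal.one_ne_top⟩
  set M : ℕ := Nat.ceil A.toReal with hMdef
  set J₀ : ℕ := 2*M+3 with hJ₀def
  set δr : ℝ := ε' (2^J₀) / 2 with hδrdef
  have hδrpos : 0 < δr := half_pos (hε'pos _)
  -- extract a fine cover with controlled gauge-sum
  have hlow : (⨅ (t : ℕ → Set X) (_ : Set.univ ⊆ iUnion t)
      (_ : ∀ n, EMetric.diam (t n) ≤ ENNReal.ofReal δr),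
      ∑' n, ⨆ _ : (t n).Nonempty,
        ENNReal.ofReal (auxg ε' (EMetric.diam (t n)).toReal)) < A := by
    refine lt_of_le_of_lt ?_ (ENNReal.lt_add_right hC.ne one_ne_zero)
    conv_rhs => rw [hMeas, Measure.mkMetric_apply]
    exact le_iSup₂_of_le (ENNReal.ofReal δr) (ENNReal.ofReal_pos.2 hδrpos) le_rfl
  simp only [iInf_lt_iff] at hlow
  obtain ⟨V, hcov, hdiam, hsum⟩ := hlow
  -- basic facts about the cover
  have hdtop : ∀ k, EMetric.diam (V k) ≠ ⊤ :=
    fun k => ((hdiam k).trans_lt ENNReal.ofReal_lt_top).ne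
  have hrlt : ∀ k, (EMetric.diam (V k)).toReal < ε' (2^J₀) := by
    intro k
    have h1 : (EMetric.diam (V k)).toReal ≤ δr := by
      have := ENNReal.toReal_mono ENNReal.ofReal_ne_top (hdiam k)
      rwa [ENNReal.toReal_ofReal hδrpos.le] at this
    linarith [half_lt_self (hε'pos (2^J₀))]
  have hJge : ∀ k, EMetric.diam (V k) ≠ 0 → J₀ ≤ auxJ ε' (EMetric.diam (V k)).toReal := by
    intro k hk
    have hrpos : 0 < (EMetric.diam (V k)).toReal := ENNReal.toReal_pos hk (hdtop k)
    by_contra hc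
    push_neg at hc
    have h1 : ε' (2^J₀) ≤ ε' (2 ^ (auxJ ε' (EMetric.diam (V k)).toReal + 1)) :=
      hε'anti (Nat.pow_le_pow_right (by norm_num) (by omega))
    exact absurd (le_trans h1 (auxJ_mem hε'anti hε'small hrpos)) (not_le.2 (hrlt k))
  have hrltJ : ∀ k, EMetric.diam (V k) ≠ 0 →
      (EMetric.diam (V k)).toReal < ε' (2 ^ (auxJ ε' (EMetric.diam (V k)).toReal)) := by
    intro k hk
    have hJk := hJge k hk
    have := auxJ_lt (e := ε') (r := (EMetric.diam (V k)).toReal)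
      (i := auxJ ε' (EMetric.diam (V k)).toReal - 1) (by omega)
    rwa [show auxJ ε' (EMetric.diam (V k)).toReal - 1 + 1
      = auxJ ε' (EMetric.diam (V k)).toReal by omega] at this
  -- level sets of the cover
  set Gset : ℕ → Set ℕ := fun j =>
    {k | EMetric.diam (V k) ≠ 0 ∧ auxJ ε' (EMetric.diam (V k)).toReal = j} with hGdef
  have hFcard : ∀ j, ∀ F : Finset ℕ, ↑F ⊆ Gset j → F.card ≤ 2^(j-1) := by
    intro j F hF
    rcases lt_or_ge j J₀ with hj | hj
    · have : F = ∅ := by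
        apply Finset.eq_empty_of_forall_notMem
        intro k hk
        obtain ⟨h1, h2⟩ := hF hk
        exact absurd (h2 ▸ hJge k h1) (by omega)
      simp [this]
    · -- each term of the sum over F is at least ofReal (1/(j+1))
      set c : ℝ≥0∞ := ENNReal.ofReal ((j:ℝ)+1)⁻¹ with hcdef
      have hc0 : c ≠ 0 := by
        simp only [hcdef, ne_eq, ENNReal.ofReal_eq_zero, not_le]
        positivity
      have hctop : c ≠ ⊤ := ENNReal.ofReal_ne_top
      have hterm : ∀ k ∈ F, c ≤ ⨆ _ : (V k).Nonempty,
          ENNReal.ofReal (auxg ε' (EMetric.diam (V k)).toReal) := by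
        intro k hk
        obtain ⟨h1, h2⟩ := hF hk
        have hrpos : 0 < (EMetric.diam (V k)).toReal := ENNReal.toReal_pos h1 (hdtop k)
        have hne : (V k).Nonempty := by
          rcases Set.eq_empty_or_nonempty (V k) with he | hne
          · rw [he] at h1; exact absurd EMetric.diam_empty h1
          · exact hne
        refine le_iSup_of_le hne ?_
        rw [auxg_of_pos hrpos, h2]
      have hcard : (F.card : ℝ≥0∞) * c ≤ A := by
        calc (F.card : ℝ≥0∞) * c = ∑ _k ∈ F, c := by
              rw [Finset.sum_const, nsmul_eq_mul]
          _ ≤ ∑ k ∈ F, ⨆ _ : (V k).Nonempty,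
              ENNReal.ofReal (auxg ε' (EMetric.diam (V k)).toReal) :=
              Finset.sum_le_sum hterm
          _ ≤ ∑' k, ⨆ _ : (V k).Nonempty,
              ENNReal.ofReal (auxg ε' (EMetric.diam (V k)).toReal) :=
              ENNReal.sum_le_tsum F
          _ ≤ A := hsum.le
      have hdiv : (F.card : ℝ≥0∞) ≤ A / c :=
        (ENNReal.le_div_iff_mul_le (Or.inl hc0) (Or.inl hctop)).2 hcard
      have hdivtop : A / c ≠ ⊤ := (ENNReal.div_lt_top hAtop hc0).ne
      have hreal : (F.card : ℝ) ≤ A.toReal * ((j:ℝ)+1) := by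
        have h1 := ENNReal.toReal_mono hdivtop hdiv
        rw [ENNReal.toReal_div, hcdef,
          ENNReal.toReal_ofReal (show (0:ℝ) ≤ ((j:ℝ)+1)⁻¹ by positivity),
          div_eq_mul_inv, inv_inv] at h1
        simpa using h1
      have hnat : F.card ≤ M * (j+1) := by
        have h2 : (F.card : ℝ) ≤ (M : ℝ) * ((j:ℝ)+1) := by
          refine le_trans hreal ?_
          exact mul_le_mul_of_nonneg_right (Nat.le_ceil _) (by positivity)
        exact_mod_cast h2
      -- now M * (j+1) ≤ 2^(j-1) since j ≥ 2M+3
      refine le_trans hnat ?_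
      have h1 : j + 1 ≤ 2*(j-(M+2)) + 2 := by omega
      calc M * (j+1) ≤ M * (2*(j-(M+2)) + 2) := Nat.mul_le_mul_left M h1
        _ ≤ 2 ^ (M + (j-(M+2)) + 1) := auxpow M _
        _ = 2 ^ (j-1) := by congr 1; omega
  have hGfin : ∀ j, (Gset j).Finite := by
    intro j
    by_contra hinf
    have hinf' : (Gset j).Infinite := hinf
    obtain ⟨F, hsub, hcard⟩ := hinf'.exists_subset_card_eq (2^(j-1) + 1)
    have := hFcard j F hsub
    omega
  set GF : ℕ → Finset ℕ := fun j => (hGfin j).toFinset with hGFdef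
  have hGFcard : ∀ j, (GF j).card ≤ 2^(j-1) := by
    intro j
    exact hFcard j (GF j) (by simp [hGFdef])
  have hGFmem : ∀ k, EMetric.diam (V k) ≠ 0 →
      k ∈ GF (auxJ ε' (EMetric.diam (V k)).toReal) := by
    intro k hk
    simp only [hGFdef, Set.Finite.mem_toFinset]
    exact ⟨hk, rfl⟩
  -- the packing function
  set φ : ℕ → ℕ := fun k => 2 ^ (auxJ ε' (EMetric.diam (V k)).toReal - 1) + 1 +
    ((GF (auxJ ε' (EMetric.diam (V k)).toReal)).filter (fun m => m < k)).card with hφdef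
  have hφub : ∀ k, EMetric.diam (V k) ≠ 0 →
      φ k ≤ 2 ^ (auxJ ε' (EMetric.diam (V k)).toReal) := by
    intro k hk
    have hmem := hGFmem k hk
    have hjge := hJge k hk
    set j := auxJ ε' (EMetric.diam (V k)).toReal with hj
    have hfc : ((GF j).filter (fun m => m < k)).card ≤ (GF j).card - 1 := by
      have hsub : (GF j).filter (fun m => m < k) ⊆ (GF j).erase k := by
        intro m hm
        simp only [Finset.mem_filter] at hm
        exact Finset.mem_erase.2 ⟨by omega, hm.1⟩
      calc ((GF j).filter (fun m => m < k)).card ≤ ((GF j).erase k).card :=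
            Finset.card_le_card hsub
        _ = (GF j).card - 1 := Finset.card_erase_of_mem hmem
    have hc1 : 1 ≤ (GF j).card := Finset.card_pos.2 ⟨k, hmem⟩
    have hc2 : (GF j).card ≤ 2^(j-1) := hGFcard j
    have hpow : 2^(j-1) + 2^(j-1) = 2^j := by
      rw [← two_mul, ← pow_succ']
      congr 1; omega
    simp only [hφdef]
    rw [← hj]
    omega
  have hφlb : ∀ k, 2 ^ (auxJ ε' (EMetric.diam (V k)).toReal - 1) < φ k := by
    intro k; simp only [hφdef]; omega
  -- φ is injective on positive-diameter indices
  have hφinj : ∀ k k', EMetric.diam (V k) ≠ 0 → EMetric.diam (V k') ≠ 0 →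
      φ k = φ k' → k = k' := by
    have hmain : ∀ k k', EMetric.diam (V k) ≠ 0 → EMetric.diam (V k') ≠ 0 →
        φ k = φ k' → ¬ k < k' := by
      intro k k' hk hk' heq hlt
      have h1 := hφub k hk
      have h1' := hφub k' hk'
      have h2 := hφlb k
      have h2' := hφlb k'
      have hmemk := hGFmem k hk
      have heq' := heq
      simp only [hφdef] at heq'
      set j := auxJ ε' (EMetric.diam (V k)).toReal with hj
      set j' := auxJ ε' (EMetric.diam (V k')).toReal with hj'
      rcases Nat.lt_trichotomy j j' with hjj | hjj | hjj
      · have hp : 2^j ≤ 2^(j'-1) := Nat.pow_le_pow_right (by norm_num) (by omega)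
        omega
      · -- same level: compare filter cards
        have hcards := filter_card_lt hmemk hlt
        rw [← hjj] at heq'
        omega
      · have hp : 2^j' ≤ 2^(j-1) := Nat.pow_le_pow_right (by norm_num) (by omega)
        omega
    intro k k' hk hk' heq
    rcases Nat.lt_trichotomy k k' with h | h | h
    · exact absurd h (hmain k k' hk hk' heq)
    · exact h
    · exact absurd h (hmain k' k hk' hk heq.symm)
  -- the final assignment
  set σ : ℕ → ℕ := fun k => if EMetric.diam (V k) = 0 then 2*k+1 else 2*φ k with hσdef
  have hσinj : Function.Injective σ := by
    intro k k' h
    simp only [hσdef] at h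
    by_cases h1 : EMetric.diam (V k) = 0 <;> by_cases h2 : EMetric.diam (V k') = 0
    · rw [if_pos h1, if_pos h2] at h; omega
    · rw [if_pos h1, if_neg h2] at h; omega
    · rw [if_neg h1, if_pos h2] at h; omega
    · rw [if_neg h1, if_neg h2] at h
      exact hφinj k k' h1 h2 (by omega)
  refine ⟨fun n => if hn : ∃ k, σ k = n then V hn.choose else ∅, ?_, ?_⟩
  · -- covering
    intro x
    obtain ⟨_, ⟨k, rfl⟩, hk⟩ := hcov (Set.mem_univ x)
    refine ⟨σ k, ?_⟩
    have hex : ∃ k', σ k' = σ k := ⟨k, rfl⟩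
    show x ∈ (if hn : ∃ k', σ k' = σ k then V hn.choose else ∅)
    rw [dif_pos hex]
    rw [hσinj hex.choose_spec]
    exact hk
  · -- diameter bounds
    intro n
    show EMetric.diam (if hn : ∃ k, σ k = n then V hn.choose else ∅) ≤ ENNReal.ofReal (ε n)
    by_cases hn : ∃ k, σ k = n
    · rw [dif_pos hn]
      set k := hn.choose with hkdef
      have hσk : σ k = n := hn.choose_spec
      by_cases h0 : EMetric.diam (V k) = 0
      · rw [h0]; exact zero_le
      · have hneq : n = 2 * φ k := by
          simp only [hσdef, if_neg h0] at hσk; omega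
        have hrpos : 0 < (EMetric.diam (V k)).toReal := ENNReal.toReal_pos h0 (hdtop k)
        set j := auxJ ε' (EMetric.diam (V k)).toReal with hj
        have hrb : (EMetric.diam (V k)).toReal ≤ ε (n) := by
          have h1 : (EMetric.diam (V k)).toReal < ε' (2^j) := hrltJ k h0
          have h2 : ε' (2^j) ≤ ε' (φ k) := hε'anti (hφub k h0)
          have h3 : ε' (φ k) ≤ ε (2 * φ k) := hε'le (φ k)
          rw [hneq]; linarith
        calc EMetric.diam (V k) = ENNReal.ofReal (EMetric.diam (V k)).toReal :=
              (ENNReal.ofReal_toReal (hdtop k)).symm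
          _ ≤ ENNReal.ofReal (ε n) := ENNReal.ofReal_le_ofReal hrb
    · rw [dif_neg hn]
      rw [show EMetric.diam (∅ : Set X) = 0 from Metric.ediam_empty]; exact zero_le
end

section
/- For every sequence (ε_n) of positive reals there exists a Hausdorff function h such that: if a metric space X (without isolated points) satisfies H^h(X) = 0, then X admits a countable cover {U_n} with diam(U_n) ≤ ε_n for all n, such that every point of X belongs to infinitely many U_n (a λ-cover). -/
open Set Filter MeasureTheory ENNReal

namespace Stmt2Aux


noncomputable def dSeq (ε : ℕ → ℝ) : ℕ → ℝ
  | 0 => min (ε 0) 1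
  | n+1 => min (min (ε (n+1)) ((1/2)^(n+1))) (dSeq ε n)

variable {ε : ℕ → ℝ}

lemma dSeq_pos (hε : ∀ n, 0 < ε n) : ∀ n, 0 < dSeq ε n
  | 0 => lt_min (hε 0) one_pos
  | n+1 => by
      simp only [dSeq, lt_min_iff]
      exact ⟨⟨hε (n+1), by positivity⟩, dSeq_pos hε n⟩

lemma dSeq_antitone : Antitone (dSeq ε) := by
  apply antitone_nat_of_succ_le
  intro n
  simp [dSeq]

lemma dSeq_le_eps : ∀ n, dSeq ε n ≤ ε n
  | 0 => min_le_left _ _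
  | n+1 => le_trans (min_le_left _ _) (min_le_left _ _)

lemma dSeq_le_pow : ∀ n, dSeq ε n ≤ (1/2 : ℝ)^n
  | 0 => by simpa [dSeq] using min_le_right _ _
  | n+1 => le_trans (min_le_left _ _) (min_le_right _ _)

noncomputable def NN (ε : ℕ → ℝ) (r : ℝ) : ℕ := sInf {n | dSeq ε n ≤ r}

lemma NN_exists {r : ℝ} (hr : 0 < r) : {n | dSeq ε n ≤ r}.Nonempty := by
  obtain ⟨n, hn⟩ := exists_pow_lt_of_lt_one hr (by norm_num : (1/2 : ℝ) < 1)
  exact ⟨n, le_of_lt (lt_of_le_of_lt (dSeq_le_pow n) hn)⟩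

lemma NN_spec {r : ℝ} (hr : 0 < r) : dSeq ε (NN ε r) ≤ r :=
  Nat.sInf_mem (NN_exists hr)

lemma NN_min {r : ℝ} {m : ℕ} (hm : m < NN ε r) : r < dSeq ε m := by
  by_contra h
  exact absurd (Nat.sInf_le (show m ∈ {n | dSeq ε n ≤ r} from not_lt.mp h)) (not_le.mpr hm)

lemma NN_anti {r r' : ℝ} (hr : 0 < r) (hrr : r ≤ r') : NN ε r' ≤ NN ε r :=
  Nat.sInf_le (show NN ε r ∈ {n | dSeq ε n ≤ r'} from le_trans (NN_spec hr) hrr)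

noncomputable def hFn (ε : ℕ → ℝ) (r : ℝ) : ℝ :=
  if r ≤ 0 then 0 else ((NN ε r : ℝ) + 1)⁻¹

lemma hFn_nonneg (r : ℝ) : 0 ≤ hFn ε r := by
  unfold hFn; split
  · exact le_refl 0
  · positivity

lemma keyA (hε : ∀ n, 0 < ε n) {r : ℝ} {j : ℕ}
    (h : hFn ε r < ((j : ℝ) + 1)⁻¹) : r < dSeq ε j := by
  unfold hFn at h
  split at h
  · exact lt_of_le_of_lt (by assumption) (dSeq_pos hε j)
  · have hr : 0 < r := lt_of_not_ge (by assumption)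
    have hlt : (j : ℝ) + 1 < (NN ε r : ℝ) + 1 := by
      have := (inv_lt_inv₀ (by positivity) (by positivity)).mp h
      linarith
    exact NN_min (by exact_mod_cast (by linarith : (j : ℝ) < NN ε r))

lemma hFn_eq_zero_iff (hε : ∀ n, 0 < ε n) {r : ℝ} (hr : 0 ≤ r) :
    hFn ε r = 0 ↔ r = 0 := by
  unfold hFn
  split_ifs with h
  · simp [le_antisymm h hr]
  · constructor
    · intro habs; exfalso; revert habs; positivity
    · intro h0; exact absurd (le_of_eq h0) h

lemma hFn_monotoneOn : MonotoneOn (hFn ε) (Set.Ici 0) := by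
  intro r hr r' hr' hrr
  rcases eq_or_lt_of_le (Set.mem_Ici.mp hr : (0:ℝ) ≤ r) with h0 | h0
  · rw [hFn, if_pos (le_of_eq h0.symm)]; exact hFn_nonneg r'
  · have hr'pos : 0 < r' := lt_of_lt_of_le h0 hrr
    rw [hFn, hFn, if_neg (not_le.mpr h0), if_neg (not_le.mpr hr'pos)]
    apply inv_anti₀ (by positivity)
    have := NN_anti (ε := ε) h0 hrr
    exact_mod_cast by exact_mod_cast Nat.add_le_add_right this 1

lemma hFn_rightCont (hε : ∀ n, 0 < ε n) (r : ℝ) (hr : 0 ≤ r) :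
    ContinuousWithinAt (hFn ε) (Set.Ici r) r := by
  rcases eq_or_lt_of_le hr with h0 | h0
  · -- r = 0
    subst h0
    rw [Metric.continuousWithinAt_iff]
    intro η hη
    obtain ⟨j, hj⟩ := exists_nat_gt η⁻¹
    refine ⟨dSeq ε j, dSeq_pos hε j, ?_⟩
    intro s hs hdist
    have hs0 : 0 ≤ s := hs
    rw [Real.dist_eq, abs_sub_lt_iff] at hdist
    have hsd : s < dSeq ε j := by simpa using hdist.1
    have h0 : hFn ε 0 = 0 := by simp [hFn]
    rw [h0, Real.dist_eq, sub_zero, abs_of_nonneg (hFn_nonneg s)]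
    rcases eq_or_lt_of_le hs0 with hs1 | hs1
    · rw [← hs1, h0]; exact hη
    · rw [hFn, if_neg (not_le.mpr hs1)]
      have hNN : j < NN ε s := by
        by_contra hc
        have h4 : dSeq ε j ≤ dSeq ε (NN ε s) := dSeq_antitone (ε := ε) (not_lt.mp hc)
        exact absurd (lt_of_lt_of_le hsd (h4.trans (NN_spec hs1))) (lt_irrefl s)
      have : η⁻¹ < (NN ε s : ℝ) + 1 := by
        have : (j : ℝ) < NN ε s := by exact_mod_cast hNN
        linarith
      calc ((NN ε s : ℝ) + 1)⁻¹ < (η⁻¹)⁻¹ :=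
            (inv_lt_inv₀ (by positivity) (by positivity)).mpr this
        _ = η := inv_inv η
  · -- r > 0 : locally constant to the right
    have hconst : ∃ v, r < v ∧ ∀ s ∈ Set.Ico r v, hFn ε s = hFn ε r := by
      rcases Nat.eq_zero_or_pos (NN ε r) with hN | hN
      · refine ⟨r + 1, by linarith, ?_⟩
        intro s ⟨hs1, _⟩
        have hs0 : 0 < s := lt_of_lt_of_le h0 hs1
        have h1 : NN ε s = 0 := Nat.le_zero.mp (hN ▸ NN_anti h0 hs1)
        rw [hFn, hFn, if_neg (not_le.mpr hs0), if_neg (not_le.mpr h0), h1, hN]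
      · refine ⟨dSeq ε (NN ε r - 1), NN_min (Nat.sub_lt hN one_pos), ?_⟩
        intro s ⟨hs1, hs2⟩
        have hs0 : 0 < s := lt_of_lt_of_le h0 hs1
        have hle : NN ε s ≤ NN ε r := NN_anti h0 hs1
        have hge : NN ε r ≤ NN ε s := by
          by_contra hc
          have h3 : NN ε s ≤ NN ε r - 1 := by omega
          have h4 : s < dSeq ε (NN ε s) :=
            lt_of_lt_of_le hs2 (dSeq_antitone (ε := ε) h3)
          exact absurd (lt_of_le_of_lt (NN_spec hs0) h4) (lt_irrefl _)
        rw [hFn, hFn, if_neg (not_le.mpr hs0), if_neg (not_le.mpr h0),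
          le_antisymm hle hge]
    obtain ⟨v, hv, hcv⟩ := hconst
    have hev : hFn ε =ᶠ[nhdsWithin r (Set.Ici r)] (fun _ => hFn ε r) := by
      filter_upwards [Ico_mem_nhdsGE_of_mem ⟨le_refl r, hv⟩] with s hs
      exact hcv s hs
    exact (continuousWithinAt_const).congr_of_eventuallyEq
      (by filter_upwards [Ico_mem_nhdsGE_of_mem ⟨le_refl r, hv⟩] with s hs using hcv s hs)
      (by simp)

lemma isHausdorffFn_hFn (hε : ∀ n, 0 < ε n) :
    (∀ r, 0 ≤ r → 0 ≤ hFn ε r) ∧ MonotoneOn (hFn ε) (Set.Ici 0) ∧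
    (∀ r, 0 ≤ r → ContinuousWithinAt (hFn ε) (Set.Ici r) r) ∧
    ∀ r, 0 ≤ r → (hFn ε r = 0 ↔ r = 0) :=
  ⟨fun r _ => hFn_nonneg r, hFn_monotoneOn, hFn_rightCont hε, fun _ h => hFn_eq_zero_iff hε h⟩



lemma odd_pow_inj : ∀ k l a b : ℕ, (2*a+1)*2^k = (2*b+1)*2^l → k = l ∧ a = b := by
  intro k
  induction k with
  | zero =>
    intro l a b h
    cases l with
    | zero => simp at h; omega
    | succ l =>
      exfalso
      have h2 : (2:ℕ) ∣ (2*b+1)*2^(l+1) :=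
        Dvd.dvd.mul_left (dvd_pow_self 2 (Nat.succ_ne_zero l)) _
      rw [← h] at h2
      simp at h
      omega
  | succ k ih =>
    intro l a b h
    cases l with
    | zero =>
      exfalso
      have h2 : (2:ℕ) ∣ (2*a+1)*2^(k+1) :=
        Dvd.dvd.mul_left (dvd_pow_self 2 (Nat.succ_ne_zero k)) _
      rw [h] at h2
      simp at h2
    | succ l =>
      have h' : ((2*a+1)*2^k) * 2 = ((2*b+1)*2^l) * 2 := by
        rw [pow_succ, pow_succ] at h
        ring_nf at h ⊢
        linarith
      have := ih l a b (Nat.eq_of_mul_eq_mul_right two_pos h')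
      omega


lemma isHausdorffFn_hFn' (hε : ∀ n, 0 < ε n) : IsHausdorffFn (hFn ε) :=
  ⟨fun r _ => hFn_nonneg r, hFn_monotoneOn, hFn_rightCont hε, fun _ h => hFn_eq_zero_iff hε h⟩

end Stmt2Aux

open Stmt2Aux in
/-- For every sequence of positive reals there is a Hausdorff function `h` such that any
metric space without isolated points with `H^h(X) = 0` admits an `ε`-fine `λ`-cover. -/
theorem stmt2 (ε : ℕ → ℝ) (hε : ∀ n, 0 < ε n) :
    ∃ h : ℝ → ℝ, IsHausdorffFn h ∧
      ∀ (X : Type) [MetricSpace X] [MeasurableSpace X] [BorelSpace X],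
        (∀ x : X, x ∈ closure ({x}ᶜ)) →
        hMeas h (Set.univ : Set X) = 0 →
        ∃ U : ℕ → Set X,
          (∀ x : X, ∃ n, x ∈ U n) ∧
          (∀ n, EMetric.diam (U n) ≤ ENNReal.ofReal (ε n)) ∧
          (∀ x : X, {n | x ∈ U n}.Infinite) := by
  classical
  refine ⟨hFn ε, isHausdorffFn_hFn' hε, ?_⟩
  intro X _ _ _ _hperf h0
  set m : ℝ≥0∞ → ℝ≥0∞ := fun r => ENNReal.ofReal (hFn ε r.toReal) with hm
  -- Step 1: extract fine covers with small gauge-sums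
  have hcovers : ∀ k : ℕ, ∃ t : ℕ → Set X, (univ : Set X) ⊆ iUnion t ∧
      (∀ n, EMetric.diam (t n) ≤ 1) ∧
      ∑' n, ⨆ _ : (t n).Nonempty, m (EMetric.diam (t n)) < (2 ^ (k+6) : ℝ≥0∞)⁻¹ := by
    intro k
    have happ := Measure.mkMetric_apply (X := X) m univ
    rw [show Measure.mkMetric m (univ : Set X) = 0 from h0] at happ
    have hle : (⨅ (t : ℕ → Set X) (_ : (univ : Set X) ⊆ iUnion t)
        (_ : ∀ n, EMetric.diam (t n) ≤ 1),
        ∑' n, ⨆ _ : (t n).Nonempty, m (EMetric.diam (t n))) ≤ 0 := by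
      rw [happ]
      exact le_iSup₂_of_le 1 one_pos le_rfl
    have hpos : (0:ℝ≥0∞) < (2 ^ (k+6) : ℝ≥0∞)⁻¹ :=
      ENNReal.inv_pos.mpr (ENNReal.pow_ne_top ENNReal.ofNat_ne_top)
    have hlt := lt_of_le_of_lt hle hpos
    obtain ⟨t, ht⟩ := iInf_lt_iff.mp hlt
    obtain ⟨hcov, ht2⟩ := iInf_lt_iff.mp ht
    obtain ⟨hdiam, ht3⟩ := iInf_lt_iff.mp ht2
    exact ⟨t, hcov, hdiam, ht3⟩
  choose t hcov hdiam hsum using hcovers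
  -- notation
  set mk' : ℕ → ℕ → ℝ≥0∞ :=
    fun k i => ⨆ _ : (t k i).Nonempty, m (EMetric.diam (t k i)) with hmk'
  have hsum_ne_top : ∀ k, (∑' i, mk' k i) ≠ ⊤ := fun k =>
    ((hsum k).trans_le le_top).ne
  -- rank sets
  set S : ℕ → ℕ → Set ℕ :=
    fun k i => {i' | mk' k i < mk' k i' ∨ (mk' k i' = mk' k i ∧ i' ≤ i)} with hS
  have hSsub : ∀ k i, S k i ⊆ {i' | mk' k i ≤ mk' k i'} := by
    intro k i i' hi'
    rcases hi' with h | h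
    · exact le_of_lt h
    · exact le_of_eq h.1.symm
  have hSfin : ∀ k i, mk' k i ≠ 0 → (S k i).Finite := fun k i hne =>
    (ENNReal.finite_const_le_of_tsum_ne_top (hsum_ne_top k) hne).subset (hSsub k i)
  set ρ : ℕ → ℕ → ℕ := fun k i => (S k i).ncard with hρ
  have hself : ∀ k i, i ∈ S k i := fun k i => Or.inr ⟨rfl, le_rfl⟩
  have hρ_pos : ∀ k i, mk' k i ≠ 0 → 1 ≤ ρ k i := by
    intro k i hne
    exact (Set.ncard_pos (hSfin k i hne)).mpr ⟨i, hself k i⟩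
  have hρ_bound : ∀ k i, mk' k i ≠ 0 → (ρ k i : ℝ≥0∞) * mk' k i ≤ ∑' i', mk' k i' := by
    intro k i hne
    have hfin := hSfin k i hne
    calc (ρ k i : ℝ≥0∞) * mk' k i = ∑ _i' ∈ hfin.toFinset, mk' k i := by
          rw [Finset.sum_const, nsmul_eq_mul]
          congr 2
          exact Set.ncard_eq_toFinset_card (S k i) hfin
      _ ≤ ∑ i' ∈ hfin.toFinset, mk' k i' := by
          apply Finset.sum_le_sum
          intro i' hi'
          exact hSsub k i (hfin.mem_toFinset.mp hi')
      _ ≤ ∑' i', mk' k i' := ENNReal.sum_le_tsum _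
  -- injectivity of the rank
  have hρ_inj : ∀ k i i', mk' k i ≠ 0 → mk' k i' ≠ 0 → ρ k i = ρ k i' → i = i' := by
    intro k i i' hni hni' heq
    by_contra hne
    -- helper: strictly smaller value gives strictly bigger rank
    have hval : ∀ a b : ℕ, mk' k a ≠ 0 → mk' k a < mk' k b → ρ k b < ρ k a := by
      intro a b hna hab
      apply Set.ncard_lt_ncard _ (hSfin k a hna)
      constructor
      · intro j hj
        left
        rcases hj with h | h
        · exact lt_trans hab h
        · exact h.1 ▸ hab
      · intro hcontra
        have ha : a ∈ S k b := hcontra (hself k a)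
        rcases ha with h | h
        · exact absurd hab (lt_asymm h)
        · exact absurd h.1 hab.ne
    rcases lt_trichotomy (mk' k i) (mk' k i') with hv | hv | hv
    · exact absurd heq (Nat.ne_of_gt (hval i i' hni hv))
    · -- equal values, distinct indices
      have hmono : ∀ a b : ℕ, mk' k b ≠ 0 → mk' k a = mk' k b → a < b → ρ k a < ρ k b := by
        intro a b hnb hab hlt
        apply Set.ncard_lt_ncard _ (hSfin k b hnb)
        constructor
        · intro j hj
          rcases hj with h | h
          · exact Or.inl (hab ▸ h)
          · exact Or.inr ⟨h.1.trans hab, h.2.trans (le_of_lt hlt)⟩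
        · intro hcontra
          have hb : b ∈ S k a := hcontra (hself k b)
          rcases hb with h | h
          · exact absurd (hab ▸ h) (lt_irrefl _)
          · omega
      rcases Nat.lt_or_ge i i' with hlt | hge
      · exact absurd heq (Nat.ne_of_lt (hmono i i' hni' hv hlt))
      · have hlt : i' < i := by omega
        exact absurd heq (Nat.ne_of_gt (hmono i' i hni hv.symm hlt))
    · exact absurd heq.symm (Nat.ne_of_gt (hval i' i hni' hv))
  -- the slot (index assignment) function
  set slot : ℕ → ℕ → ℕ :=
    fun k i => (2 * (if mk' k i = 0 then 2*i+1 else 2 * ρ k i) + 1) * 2^k - 1 with hslot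
  have hslot_succ : ∀ k i,
      slot k i + 1 = (2 * (if mk' k i = 0 then 2*i+1 else 2 * ρ k i) + 1) * 2^k := by
    intro k i
    have h1 : 0 < (2 * (if mk' k i = 0 then 2*i+1 else 2 * ρ k i) + 1) * 2^k :=
      Nat.mul_pos (Nat.succ_pos _) (Nat.pow_pos two_pos)
    simp only [hslot]
    omega
  have hslot_inj : ∀ k i k' i', slot k i = slot k' i' → k = k' ∧ i = i' := by
    intro k i k' i' h
    have h2 : (2 * (if mk' k i = 0 then 2*i+1 else 2 * ρ k i) + 1) * 2^k
        = (2 * (if mk' k' i' = 0 then 2*i'+1 else 2 * ρ k' i') + 1) * 2^k' := by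
      rw [← hslot_succ, ← hslot_succ, h]
    obtain ⟨hk, hM⟩ := odd_pow_inj _ _ _ _ h2
    subst hk
    refine ⟨rfl, ?_⟩
    split_ifs at hM with h1 h2 h2
    · omega
    · exfalso
      have := hρ_pos k i' h2
      omega
    · exfalso
      have := hρ_pos k i h1
      omega
    · exact hρ_inj k i i' h1 h2 (by omega)
  -- per-item diameter bound
  have hdiam_ne_top : ∀ k i, EMetric.diam (t k i) ≠ ⊤ :=
    fun k i => ((hdiam k i).trans_lt ENNReal.one_lt_top).ne
  have hitem : ∀ k i, (t k i).Nonempty →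
      EMetric.diam (t k i) ≤ ENNReal.ofReal (ε (slot k i)) := by
    intro k i hne
    have hmk_eq : mk' k i = ENNReal.ofReal (hFn ε (EMetric.diam (t k i)).toReal) := by
      simp only [hmk', hm]
      rw [iSup_pos hne]
    by_cases hz : mk' k i = 0
    · have h1 : hFn ε (EMetric.diam (t k i)).toReal = 0 := by
        rw [hmk_eq] at hz
        exact le_antisymm (ENNReal.ofReal_eq_zero.mp hz) (hFn_nonneg _)
      have h2 : (EMetric.diam (t k i)).toReal = 0 :=
        (hFn_eq_zero_iff hε ENNReal.toReal_nonneg).mp h1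
      have h3 : EMetric.diam (t k i) = 0 := by
        rw [← ENNReal.ofReal_toReal (hdiam_ne_top k i), h2, ENNReal.ofReal_zero]
      rw [h3]
      exact zero_le
    · set n := slot k i with hn
      have hρ1 : 1 ≤ ρ k i := hρ_pos k i hz
      have hn1 : n + 1 = (2 * (2 * ρ k i) + 1) * 2^k := by
        rw [hn, hslot_succ k i, if_neg hz]
      have hnle : n + 1 ≤ ρ k i * 2^(k+6) := by
        rw [hn1, pow_add]
        calc (2 * (2 * ρ k i) + 1) * 2^k ≤ (ρ k i * 2^6) * 2^k := by
              apply Nat.mul_le_mul_right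
              omega
          _ = ρ k i * (2^k * 2^6) := by ring
      have hρ0 : (ρ k i : ℝ≥0∞) ≠ 0 := by
        simp only [ne_eq, Nat.cast_eq_zero]
        omega
      have hρt : (ρ k i : ℝ≥0∞) ≠ ⊤ := ENNReal.natCast_ne_top _
      have hchain : mk' k i < ((n : ℝ≥0∞) + 1)⁻¹ := by
        have h4 : (ρ k i : ℝ≥0∞) * mk' k i < (2^(k+6) : ℝ≥0∞)⁻¹ :=
          lt_of_le_of_lt (hρ_bound k i hz) (hsum k)
        have h5 : mk' k i < (ρ k i : ℝ≥0∞)⁻¹ * (2^(k+6) : ℝ≥0∞)⁻¹ := by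
          calc mk' k i = (ρ k i : ℝ≥0∞)⁻¹ * ((ρ k i : ℝ≥0∞) * mk' k i) := by
                rw [← mul_assoc, ENNReal.inv_mul_cancel hρ0 hρt, one_mul]
            _ < (ρ k i : ℝ≥0∞)⁻¹ * (2^(k+6) : ℝ≥0∞)⁻¹ := by
                rw [ENNReal.mul_lt_mul_iff_right (ENNReal.inv_ne_zero.mpr hρt)
                  (ENNReal.inv_ne_top.mpr hρ0)]
                exact h4
        have h6 : (ρ k i : ℝ≥0∞)⁻¹ * (2^(k+6) : ℝ≥0∞)⁻¹
            = ((ρ k i : ℝ≥0∞) * 2^(k+6))⁻¹ := by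
          rw [ENNReal.mul_inv (Or.inl hρ0) (Or.inl hρt)]
        have h7 : ((n : ℝ≥0∞) + 1)⁻¹ ≥ ((ρ k i : ℝ≥0∞) * 2^(k+6))⁻¹ := by
          apply ENNReal.inv_le_inv.mpr
          have := (Nat.cast_le (α := ℝ≥0∞)).mpr hnle
          push_cast at this
          exact this
        exact lt_of_lt_of_le (h6 ▸ h5) h7
      have hofr : ((n : ℝ≥0∞) + 1)⁻¹ = ENNReal.ofReal (((n : ℝ) + 1)⁻¹) := by
        rw [ENNReal.ofReal_inv_of_pos (by positivity)]
        congr 1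
        rw [show ((n : ℝ) + 1) = ((n + 1 : ℕ) : ℝ) by push_cast; ring,
          ENNReal.ofReal_natCast]
        push_cast
        ring
      rw [hmk_eq, hofr] at hchain
      have hFnlt : hFn ε (EMetric.diam (t k i)).toReal < ((n : ℝ) + 1)⁻¹ :=
        (ENNReal.ofReal_lt_ofReal_iff (by positivity)).mp hchain
      have hdr : (EMetric.diam (t k i)).toReal < dSeq ε n := keyA hε hFnlt
      have hdr2 : (EMetric.diam (t k i)).toReal ≤ ε n :=
        le_of_lt (hdr.trans_le (dSeq_le_eps n))
      calc EMetric.diam (t k i) = ENNReal.ofReal (EMetric.diam (t k i)).toReal :=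
            (ENNReal.ofReal_toReal (hdiam_ne_top k i)).symm
        _ ≤ ENNReal.ofReal (ε n) := ENNReal.ofReal_le_ofReal hdr2
  -- the λ-cover
  set U : ℕ → Set X :=
    fun n => ⋃ (k : ℕ) (i : ℕ) (_ : (t k i).Nonempty ∧ slot k i = n), t k i with hU
  have hchoice : ∀ (x : X) (k : ℕ), ∃ i, x ∈ t k i :=
    fun x k => mem_iUnion.mp (hcov k (mem_univ x))
  choose idx hidx using hchoice
  have hxU : ∀ x k, x ∈ U (slot k (idx x k)) := by
    intro x k
    rw [hU]
    exact mem_iUnion.mpr ⟨k, mem_iUnion.mpr ⟨idx x k,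
      mem_iUnion.mpr ⟨⟨⟨x, hidx x k⟩, rfl⟩, hidx x k⟩⟩⟩
  refine ⟨U, fun x => ⟨slot 0 (idx x 0), hxU x 0⟩, ?_, ?_⟩
  · intro n
    by_cases hex : ∃ k i, (t k i).Nonempty ∧ slot k i = n
    · obtain ⟨k, i, hne, hsl⟩ := hex
      have hUt : U n = t k i := by
        apply le_antisymm
        · intro x hx
          simp only [hU, mem_iUnion] at hx
          obtain ⟨k', i', ⟨hne', hsl'⟩, hx⟩ := hx
          obtain ⟨hk, hi⟩ := hslot_inj k' i' k i (hsl'.trans hsl.symm)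
          subst hk
          subst hi
          exact hx
        · intro x hx
          rw [hU]
          exact mem_iUnion.mpr ⟨k, mem_iUnion.mpr ⟨i, mem_iUnion.mpr ⟨⟨hne, hsl⟩, hx⟩⟩⟩
      rw [hUt, ← hsl]
      exact hitem k i hne
    · have hUe : U n = ∅ := by
        rw [hU, eq_empty_iff_forall_notMem]
        intro x hx
        simp only [mem_iUnion] at hx
        obtain ⟨k, i, ⟨hne, hsl⟩, _⟩ := hx
        exact hex ⟨k, i, hne, hsl⟩
      rw [hUe]
      exact (le_of_eq (Metric.ediam_empty (X := X))).trans zero_le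
  · intro x
    apply Set.infinite_of_injective_forall_mem
      (f := fun k : ℕ => slot k (idx x k))
    · intro a b hab
      exact (hslot_inj _ _ _ _ hab).1
    · intro k
      exact hxU x k
end

section
/- A subset E of a metric space satisfies H^h(E) = 0 if and only if E admits a countable λ-cover {E_n} with Σ_n h(diam E_n) < ∞. -/
open Set Filter MeasureTheory ENNReal
open Topology

/-- `H^h(E) = 0` iff `E` has a countable `λ`-cover (every point of `E` lies in infinitely
many of the sets) with finite Hausdorff sum `Σ h(diam Eₙ)`. -/
theorem stmt3 {X : Type*} [MetricSpace X] [MeasurableSpace X] [BorelSpace X]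
    (h : ℝ → ℝ) (hh : IsHausdorffFn h) (E : Set X) :
    hMeas h E = 0 ↔
      ∃ U : ℕ → Set X,
        (∀ x ∈ E, {n | x ∈ U n}.Infinite) ∧
        (∀ n, Bornology.IsBounded (U n)) ∧
        ∑' n, ENNReal.ofReal (h (Metric.diam (U n))) < ⊤ := by
  obtain ⟨hnn, hmono, hrc, hvan⟩ := hh
  have h0 : h 0 = 0 := (hvan 0 le_rfl).mpr rfl
  set m : ℝ≥0∞ → ℝ≥0∞ := fun r => ENNReal.ofReal (h r.toReal) with hm
  have hm0 : m 0 = 0 := by simp [hm, h0]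
  -- the indicator sup equals the plain value
  have hsup : ∀ s : Set X, (⨆ _ : s.Nonempty, m (EMetric.diam s)) = m (EMetric.diam s) := by
    intro s
    rcases s.eq_empty_or_nonempty with rfl | hs
    · simp [hm0]; exact ((congrArg m Metric.ediam_empty).trans hm0).symm
    · simp [hs]
  have hmd : ∀ s : Set X, ENNReal.ofReal (h (Metric.diam s)) = m (EMetric.diam s) := fun s => rfl
  constructor
  · -- forward direction
    intro hE
    have happ := Measure.mkMetric_apply m E
    rw [show (Measure.mkMetric m : Measure X) E = 0 from hE] at happ
    have hinf : (⨅ (t : ℕ → Set X) (_ : E ⊆ iUnion t) (_ : ∀ n, EMetric.diam (t n) ≤ 1),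
        ∑' n, ⨆ _ : (t n).Nonempty, m (EMetric.diam (t n))) = 0 := by
      refine le_antisymm ?_ (zero_le)
      rw [happ]
      exact le_iSup₂ (f := fun (r : ℝ≥0∞) (_ : 0 < r) => ⨅ (t : ℕ → Set X) (_ : E ⊆ iUnion t)
        (_ : ∀ n, EMetric.diam (t n) ≤ r),
        ∑' n, ⨆ _ : (t n).Nonempty, m (EMetric.diam (t n))) 1 one_pos
    have key : ∀ k : ℕ, ∃ t : ℕ → Set X, (E ⊆ iUnion t) ∧ (∀ n, EMetric.diam (t n) ≤ 1) ∧
        ∑' n, m (EMetric.diam (t n)) < (2⁻¹ : ℝ≥0∞) ^ k := by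
      intro k
      have hpos : (0 : ℝ≥0∞) < (2⁻¹ : ℝ≥0∞) ^ k := by
        exact ENNReal.pow_pos (by simp) k
      rw [← hinf] at hpos
      obtain ⟨t, ht⟩ := iInf_lt_iff.1 hpos
      obtain ⟨hcov, ht⟩ := iInf_lt_iff.1 ht
      obtain ⟨hdiam, ht⟩ := iInf_lt_iff.1 ht
      refine ⟨t, hcov, hdiam, ?_⟩
      simpa only [hsup] using ht
    choose t hcov hdiam hsum using key
    set e : ℕ ≃ ℕ × ℕ := (Denumerable.eqv (ℕ × ℕ)).symm with he
    refine ⟨fun j => t (e j).1 (e j).2, ?_, ?_, ?_⟩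
    · intro x hx
      have hS : {p : ℕ × ℕ | x ∈ t p.1 p.2}.Infinite := by
        intro hfin
        have himg : (Set.univ : Set ℕ) ⊆ Prod.fst '' {p : ℕ × ℕ | x ∈ t p.1 p.2} := by
          intro k _
          obtain ⟨n, hn⟩ := mem_iUnion.1 (hcov k hx)
          exact ⟨(k, n), hn, rfl⟩
        exact Set.infinite_univ (Set.Finite.subset (hfin.image Prod.fst) himg)
      have : {j : ℕ | x ∈ t (e j).1 (e j).2} = e ⁻¹' {p : ℕ × ℕ | x ∈ t p.1 p.2} := rfl
      rw [this]
      exact hS.preimage (by rw [e.surjective.range_eq]; exact subset_univ _)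
    · intro j
      rw [Metric.isBounded_iff_ediam_ne_top]
      exact ne_top_of_le_ne_top one_ne_top (hdiam _ _)
    · have := calc
        ∑' j : ℕ, m (EMetric.diam (t (e j).1 (e j).2))
            = ∑' p : ℕ × ℕ, m (EMetric.diam (t p.1 p.2)) :=
          e.tsum_eq (fun p => m (EMetric.diam (t p.1 p.2)))
        _ = ∑' k : ℕ, ∑' n : ℕ, m (EMetric.diam (t k n)) := ENNReal.tsum_prod (f := fun k n => m (EMetric.diam (t k n)))
        _ ≤ ∑' k : ℕ, (2⁻¹ : ℝ≥0∞) ^ k := ENNReal.tsum_le_tsum fun k => (hsum k).le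
        _ = (1 - 2⁻¹)⁻¹ := ENNReal.tsum_geometric _
        _ < ⊤ := by norm_num
      simpa only [hmd] using this
  · -- reverse direction
    rintro ⟨U, hlam, hbd, hfin⟩
    set S : ℕ → ℝ≥0∞ := fun n => ENNReal.ofReal (h (Metric.diam (U n))) with hS
    -- diameters tend to 0
    have hS0 : Tendsto S atTop (𝓝 0) := ENNReal.tendsto_atTop_zero_of_tsum_ne_top hfin.ne
    have hdiam0 : ∀ c : ℝ, 0 < c → ∀ᶠ n in atTop, Metric.diam (U n) < c := by
      intro c hc
      have hhc : 0 < ENNReal.ofReal (h c) := by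
        rw [ENNReal.ofReal_pos]
        rcases lt_or_eq_of_le (hnn c hc.le) with h' | h'
        · exact h'
        · exact absurd ((hvan c hc.le).1 h'.symm) hc.ne'
      filter_upwards [hS0.eventually_lt_const hhc] with n hn
      by_contra hcon
      push_neg at hcon
      have : h c ≤ h (Metric.diam (U n)) := hmono hc.le (hc.le.trans hcon) hcon
      exact absurd (lt_of_le_of_lt (ENNReal.ofReal_le_ofReal this) hn) (lt_irrefl _)
    -- show measure is ≤ ε for all ε > 0
    have key : ∀ ε : ℝ≥0∞, 0 < ε → hMeas h E ≤ ε := by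
      intro ε hε
      rw [hMeas, Measure.mkMetric_apply]
      refine iSup₂_le fun r hr => ?_
      -- eventual small diameters in emetric sense
      have hed : ∀ᶠ n in atTop, EMetric.diam (U n) ≤ r := by
        rcases eq_or_ne r ⊤ with rfl | hrt
        · exact Eventually.of_forall fun n => le_top
        · have hrr : 0 < r.toReal := ENNReal.toReal_pos hr.ne' hrt
          filter_upwards [hdiam0 r.toReal hrr] with n hn
          calc EMetric.diam (U n) = ENNReal.ofReal (Metric.diam (U n)) :=
                (ENNReal.ofReal_toReal (hbd n).ediam_ne_top).symm
            _ ≤ ENNReal.ofReal r.toReal := ENNReal.ofReal_le_ofReal hn.le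
            _ = r := ENNReal.ofReal_toReal hrt
      have htail : ∀ᶠ k in atTop, ∑' n, S (n + k) ≤ ε :=
        (ENNReal.tendsto_sum_nat_add S hfin.ne).eventually_le_const hε
      rw [eventually_atTop] at hed htail
      obtain ⟨k1, hk1⟩ := hed
      obtain ⟨k2, hk2⟩ := htail
      set k := max k1 k2 with hkdef
      have hcov : E ⊆ ⋃ n, U (n + k) := by
        intro x hx
        obtain ⟨n, hn, hnk⟩ := (hlam x hx).exists_gt k
        exact mem_iUnion.2 ⟨n - k, by simpa [Nat.sub_add_cancel hnk.le] using hn⟩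
      calc (⨅ (t : ℕ → Set X) (_ : E ⊆ iUnion t) (_ : ∀ n, EMetric.diam (t n) ≤ r),
          ∑' n, ⨆ _ : (t n).Nonempty, m (EMetric.diam (t n)))
          ≤ ∑' n, ⨆ _ : (U (n + k)).Nonempty, m (EMetric.diam (U (n + k))) :=
            iInf₂_le_of_le _ hcov (iInf_le_of_le
              (fun n => hk1 (n + k) (le_trans (le_max_left _ _) (Nat.le_add_left k n))) le_rfl)
        _ ≤ ∑' n, S (n + k) := ENNReal.tsum_le_tsum fun n =>
            iSup_le fun _ => le_of_eq (hmd _).symm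
        _ ≤ ε := hk2 k (le_max_right _ _)
    refine le_antisymm ?_ (zero_le)
    exact le_of_forall_gt_imp_ge_of_dense fun ε hε => key ε hε
end

section
/- In the Cantor space 2^ℕ with the metric d(x,y) = 2^{-n(x,y)} where n(x,y) is the least index at which x and y differ, the 1-dimensional Hausdorff measure of the whole space equals 1 and coincides on Borel sets with the standard product (coin-flipping) measure. -/
open Set Filter MeasureTheory ENNReal

/-- Cantor space `2^ℕ` with the metric `d(x,y) = 2^{-min{i : x i ≠ y i}}`. -/
noncomputable instance : MetricSpace (ℕ → Bool) :=
  PiNat.metricSpaceOfDiscreteUniformity fun _ => rfl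

namespace CantorH1

noncomputable def gauge : ℝ≥0∞ → ℝ≥0∞ := fun r => ENNReal.ofReal r.toReal

lemma hMeas_eq : (hMeas (fun r => r) : Measure (ℕ → Bool)) = Measure.mkMetric gauge := rfl

lemma cyl_eq (z : ℕ → Bool) (n : ℕ) :
    PiNat.cylinder z n = {x : ℕ → Bool | ∀ i : Fin n, x i = z i} := by
  ext x
  simp only [PiNat.mem_cylinder_iff, mem_setOf_eq]
  exact ⟨fun h i => h i i.2, fun h i hi => h ⟨i, hi⟩⟩

/-- extension of a finite word by `false`s -/
def ext0 (n : ℕ) (p : Fin n → Bool) : ℕ → Bool :=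
  fun i => if h : i < n then p ⟨i, h⟩ else false

lemma ext0_lt {n : ℕ} (p : Fin n → Bool) {i : ℕ} (h : i < n) : ext0 n p i = p ⟨i, h⟩ := by
  simp [ext0, h]

lemma cylSet_eq (n : ℕ) (p : Fin n → Bool) :
    {x : ℕ → Bool | ∀ i : Fin n, x i = p i} = PiNat.cylinder (ext0 n p) n := by
  rw [cyl_eq]
  ext x
  simp only [mem_setOf_eq]
  constructor
  · intro h i
    rw [ext0_lt p i.2, h i]
  · intro h i
    rw [h i, ext0_lt p i.2]

lemma measure_cylinder (μ : Measure (ℕ → Bool))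
    (Hμ : ∀ (n : ℕ) (p : Fin n → Bool), μ {x | ∀ i : Fin n, x i = p i} = 1 / 2 ^ n)
    (z : ℕ → Bool) (n : ℕ) : μ (PiNat.cylinder z n) = (2 : ℝ≥0∞)⁻¹ ^ n := by
  rw [cyl_eq, Hμ n (fun i => z i), one_div, ← ENNReal.inv_pow]

lemma ofReal_half_pow (n : ℕ) : ENNReal.ofReal ((1/2 : ℝ) ^ n) = (2 : ℝ≥0∞)⁻¹ ^ n := by
  rw [ENNReal.ofReal_pow (by norm_num), one_div, ENNReal.ofReal_inv_of_pos two_pos,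
    ENNReal.ofReal_ofNat]

lemma edist_le_one (x y : ℕ → Bool) : edist x y ≤ 1 := by
  rw [edist_dist]
  rw [show (1 : ℝ≥0∞) = ENNReal.ofReal 1 by simp]
  apply ENNReal.ofReal_le_ofReal
  rcases eq_or_ne x y with rfl | h
  · simp
  · rw [PiNat.dist_eq_of_ne h]
    apply pow_le_one₀ <;> norm_num

lemma diam_le_one (s : Set (ℕ → Bool)) : EMetric.diam s ≤ 1 :=
  EMetric.diam_le fun x _ y _ => edist_le_one x y

lemma diam_ne_top (s : Set (ℕ → Bool)) : EMetric.diam s ≠ ⊤ :=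
  (lt_of_le_of_lt (diam_le_one s) one_lt_top).ne

lemma gauge_diam (s : Set (ℕ → Bool)) : gauge (EMetric.diam s) = EMetric.diam s :=
  ENNReal.ofReal_toReal (diam_ne_top s)

lemma diam_cylinder_le (z : ℕ → Bool) (n : ℕ) :
    EMetric.diam (PiNat.cylinder z n) ≤ (2 : ℝ≥0∞)⁻¹ ^ n := by
  apply EMetric.diam_le
  intro x hx y hy
  have hxy : y ∈ PiNat.cylinder x n := by
    rw [PiNat.mem_cylinder_iff] at hx hy ⊢
    intro i hi
    rw [hy i hi, hx i hi]
  have hd : dist y x ≤ (1/2 : ℝ) ^ n := PiNat.mem_cylinder_iff_dist_le.1 hxy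
  rw [edist_dist, ← ofReal_half_pow]
  exact ENNReal.ofReal_le_ofReal (by rwa [dist_comm])

lemma subset_cylinder_of_nontrivial {t : Set (ℕ → Bool)} (ht : t.Nontrivial) :
    ∃ z n, t ⊆ PiNat.cylinder z n ∧ (2 : ℝ≥0∞)⁻¹ ^ n ≤ EMetric.diam t := by
  classical
  obtain ⟨a, ha, b, hb, hab⟩ := ht
  have hne : ∃ k, ∃ a ∈ t, ∃ b ∈ t, a ≠ b ∧ PiNat.firstDiff a b = k :=
    ⟨_, a, ha, b, hb, hab, rfl⟩
  obtain ⟨a0, ha0, b0, hb0, hab0, hfd⟩ := Nat.find_spec hne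
  refine ⟨a0, Nat.find hne, ?_, ?_⟩
  · intro y hy
    rcases eq_or_ne y a0 with rfl | hya
    · exact PiNat.self_mem_cylinder _ _
    · rw [PiNat.mem_cylinder_iff_le_firstDiff hya]
      exact Nat.find_min' hne ⟨y, hy, a0, ha0, hya, rfl⟩
  · calc (2 : ℝ≥0∞)⁻¹ ^ Nat.find hne = edist a0 b0 := by
          rw [edist_dist, PiNat.dist_eq_of_ne hab0, hfd, ofReal_half_pow]
      _ ≤ EMetric.diam t := EMetric.edist_le_diam_of_mem ha0 hb0

lemma mu_le_diam (μ : Measure (ℕ → Bool))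
    (Hμ : ∀ (n : ℕ) (p : Fin n → Bool), μ {x | ∀ i : Fin n, x i = p i} = 1 / 2 ^ n)
    (s : Set (ℕ → Bool)) : μ s ≤ EMetric.diam s := by
  rcases s.subsingleton_or_nontrivial with hs | hs
  · rcases hs.eq_empty_or_singleton with rfl | ⟨x, rfl⟩
    · simp
    · have h1 : ∀ n : ℕ, μ {x} ≤ (2 : ℝ≥0∞)⁻¹ ^ n := by
        intro n
        rw [← measure_cylinder μ Hμ x n]
        exact measure_mono (by simp [PiNat.self_mem_cylinder])
      have h0 : μ {x} ≤ 0 :=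
        ge_of_tendsto' (ENNReal.tendsto_pow_atTop_nhds_zero_of_lt_one
          (by norm_num : (2 : ℝ≥0∞)⁻¹ < 1)) h1
      exact h0.trans (zero_le)
  · obtain ⟨z, n, hsub, hdiam⟩ := subset_cylinder_of_nontrivial hs
    calc μ s ≤ μ (PiNat.cylinder z n) := measure_mono hsub
      _ = (2 : ℝ≥0∞)⁻¹ ^ n := measure_cylinder μ Hμ z n
      _ ≤ EMetric.diam s := hdiam

lemma le_H (μ : Measure (ℕ → Bool))
    (Hμ : ∀ (n : ℕ) (p : Fin n → Bool), μ {x | ∀ i : Fin n, x i = p i} = 1 / 2 ^ n) :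
    μ ≤ hMeas (fun r => r) := by
  rw [hMeas_eq]
  refine Measure.le_mkMetric gauge μ 1 one_pos fun s _ => ?_
  erw [gauge_diam]
  exact mu_le_diam μ Hμ s

lemma H_cylinder_le (z : ℕ → Bool) (n : ℕ) :
    hMeas (fun r => r) (PiNat.cylinder z n) ≤ (2 : ℝ≥0∞)⁻¹ ^ n := by
  classical
  rw [hMeas_eq]
  have key := Measure.mkMetric_le_liminf_sum (X := ℕ → Bool) (ι := fun m : ℕ => Fin m → Bool)
    (PiNat.cylinder z n) (l := atTop) (r := fun m => (2 : ℝ≥0∞)⁻¹ ^ (n + m))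
    ?_ (fun m q => PiNat.cylinder
      (fun i => if h : i < n then z i else if h2 : i - n < m then q ⟨i - n, h2⟩ else false) (n + m))
    ?_ ?_ gauge
  · refine key.trans ?_
    have hbd : ∀ m : ℕ, (∑ q : Fin m → Bool, gauge (EMetric.diam (PiNat.cylinder
        (fun i => if h : i < n then z i else if h2 : i - n < m then q ⟨i - n, h2⟩ else false)
        (n + m)))) ≤ (2 : ℝ≥0∞)⁻¹ ^ n := by
      intro m
      have : ∀ q : Fin m → Bool, gauge (EMetric.diam (PiNat.cylinder
          (fun i => if h : i < n then z i else if h2 : i - n < m then q ⟨i - n, h2⟩ else false)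
          (n + m))) ≤ (2 : ℝ≥0∞)⁻¹ ^ (n + m) := fun q => by
        rw [gauge_diam]; exact diam_cylinder_le _ _
      calc (∑ q : Fin m → Bool, gauge (EMetric.diam (PiNat.cylinder
            (fun i => if h : i < n then z i else if h2 : i - n < m then q ⟨i - n, h2⟩ else false)
            (n + m))))
          ≤ ∑ _q : Fin m → Bool, (2 : ℝ≥0∞)⁻¹ ^ (n + m) := Finset.sum_le_sum fun q _ => this q
        _ = (2 ^ m : ℕ) * (2 : ℝ≥0∞)⁻¹ ^ (n + m) := by
            rw [Finset.sum_const, Finset.card_univ]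
            simp [Fintype.card_fun, nsmul_eq_mul]
        _ = (2 : ℝ≥0∞)⁻¹ ^ n := by
            push_cast
            rw [pow_add, ← mul_assoc, mul_comm ((2:ℝ≥0∞)^m), mul_assoc, ← mul_pow,
              ENNReal.mul_inv_cancel two_ne_zero ENNReal.ofNat_ne_top, one_pow, mul_one]
    calc liminf (fun m => ∑ q : Fin m → Bool, gauge (EMetric.diam (PiNat.cylinder
          (fun i => if h : i < n then z i else if h2 : i - n < m then q ⟨i - n, h2⟩ else false)
          (n + m)))) atTop
        ≤ liminf (fun _ : ℕ => (2 : ℝ≥0∞)⁻¹ ^ n) atTop :=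
          liminf_le_liminf (Eventually.of_forall hbd)
      _ = (2 : ℝ≥0∞)⁻¹ ^ n := liminf_const _
  · -- tendsto
    have h2 : Tendsto (fun m : ℕ => (2 : ℝ≥0∞)⁻¹ ^ m) atTop (nhds 0) :=
      ENNReal.tendsto_pow_atTop_nhds_zero_of_lt_one (by norm_num)
    have := ENNReal.Tendsto.const_mul (a := (2 : ℝ≥0∞)⁻¹ ^ n) h2 (Or.inr (by simp))
    simpa [pow_add, mul_zero] using this
  · -- diam bounds
    refine Eventually.of_forall fun m q => ?_
    exact diam_cylinder_le _ _
  · -- coverage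
    refine Eventually.of_forall fun m => ?_
    intro x hx
    refine mem_iUnion.2 ⟨fun j => x (n + j), ?_⟩
    rw [PiNat.mem_cylinder_iff]
    intro i hi
    rcases lt_or_ge i n with h | h
    · rw [PiNat.mem_cylinder_iff] at hx
      simp only [h, dif_pos]
      exact hx i h
    · have h2 : i - n < m := by omega
      simp only [not_lt.2 h, dif_neg, h2, dif_pos]
      congr 1
      omega

lemma finite_count {ι : Type*} (s : Finset ι) (z : ι → ℕ → Bool) (l : ι → ℕ)
    (hcov : (univ : Set (ℕ → Bool)) ⊆ ⋃ i ∈ s, PiNat.cylinder (z i) (l i)) :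
    1 ≤ ∑ i ∈ s, (2 : ℝ≥0∞)⁻¹ ^ (l i) := by
  classical
  by_contra hlt
  push_neg at hlt
  set M := s.sup l with hM
  have hx : ∀ q : Fin M → Bool, ∃ i, i ∈ s ∧
      (fun j => if h : j < M then q ⟨j, h⟩ else false) ∈ PiNat.cylinder (z i) (l i) := by
    intro q
    have := hcov (mem_univ (fun j => if h : j < M then q ⟨j, h⟩ else false))
    simpa using this
  choose F hFs hFmem using hx
  have key : ∀ i ∈ s,
      (Finset.univ.filter fun q : Fin M → Bool => F q = i).card ≤ 2 ^ (M - l i) := by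
    intro i hi
    have hli : l i ≤ M := Finset.le_sup hi
    have := Finset.card_le_card_of_injOn
      (f := fun q : Fin M → Bool => fun j : Fin (M - l i) => q ⟨l i + j, by omega⟩)
      (s := Finset.univ.filter fun q : Fin M → Bool => F q = i)
      (t := (Finset.univ : Finset (Fin (M - l i) → Bool)))
      (fun _ _ => Finset.mem_univ _) ?_
    · simpa [Finset.card_univ, Fintype.card_fun] using this
    · intro q1 h1 q2 h2 hg
      simp only [Finset.coe_filter, Finset.mem_univ, true_and, mem_setOf_eq] at h1 h2
      have e1 := hFmem q1
      have e2 := hFmem q2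
      rw [h1] at e1
      rw [h2] at e2
      rw [PiNat.mem_cylinder_iff] at e1 e2
      funext j
      rcases lt_or_ge (j : ℕ) (l i) with hj | hj
      · have hjM : (j : ℕ) < M := j.2
        have a1 := e1 j (by omega)
        have a2 := e2 j (by omega)
        simp only [hjM, dif_pos] at a1 a2
        have : q1 ⟨(j : ℕ), hjM⟩ = q2 ⟨(j : ℕ), hjM⟩ := by rw [a1, a2]
        simpa [Fin.eta] using this
      · have hj2 : (j : ℕ) - l i < M - l i := by omega
        have := congrFun hg ⟨(j : ℕ) - l i, hj2⟩
        simp only at this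
        have he : (⟨l i + ((j : ℕ) - l i), by omega⟩ : Fin M) = j := by
          apply Fin.ext; simp; omega
        rwa [he] at this
  have total : (2 : ℕ) ^ M ≤ ∑ i ∈ s, 2 ^ (M - l i) := by
    calc (2 : ℕ) ^ M = (Finset.univ : Finset (Fin M → Bool)).card := by
          simp [Finset.card_univ, Fintype.card_fun]
      _ = ∑ i ∈ s, (Finset.univ.filter fun q : Fin M → Bool => F q = i).card :=
          Finset.card_eq_sum_card_fiberwise fun q _ => hFs q
      _ ≤ ∑ i ∈ s, 2 ^ (M - l i) := Finset.sum_le_sum key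
  have hsum : (2 : ℝ≥0∞) ^ M * ∑ i ∈ s, (2 : ℝ≥0∞)⁻¹ ^ (l i)
      = ∑ i ∈ s, (2 : ℝ≥0∞) ^ (M - l i) := by
    rw [Finset.mul_sum]
    refine Finset.sum_congr rfl fun i hi => ?_
    have hli : l i ≤ M := Finset.le_sup hi
    conv_lhs => rw [show M = (M - l i) + l i by omega, pow_add]
    rw [mul_assoc, ← mul_pow, ENNReal.mul_inv_cancel two_ne_zero ENNReal.ofNat_ne_top, one_pow, mul_one]
  have hstrict : (2 : ℝ≥0∞) ^ M * ∑ i ∈ s, (2 : ℝ≥0∞)⁻¹ ^ (l i) < (2 : ℝ≥0∞) ^ M := by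
    calc (2 : ℝ≥0∞) ^ M * ∑ i ∈ s, (2 : ℝ≥0∞)⁻¹ ^ (l i) < (2 : ℝ≥0∞) ^ M * 1 := by
          rw [ENNReal.mul_lt_mul_iff_right (pow_ne_zero _ two_ne_zero) (pow_ne_top ENNReal.ofNat_ne_top)]
          exact hlt
      _ = (2 : ℝ≥0∞) ^ M := mul_one _
  rw [hsum] at hstrict
  have hcast : (2 : ℝ≥0∞) ^ M ≤ ∑ i ∈ s, (2 : ℝ≥0∞) ^ (M - l i) := by
    have := (Nat.cast_le (α := ℝ≥0∞)).2 total
    push_cast at this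
    exact this
  exact absurd hcast (not_le.2 hstrict)

lemma tsum_diam_ge (t : ℕ → Set (ℕ → Bool)) (hcov : (univ : Set (ℕ → Bool)) ⊆ ⋃ i, t i) :
    1 ≤ ∑' i, ⨆ _ : (t i).Nonempty, EMetric.diam (t i) := by
  by_contra hlt
  push_neg at hlt
  set c := ∑' i, ⨆ _ : (t i).Nonempty, EMetric.diam (t i) with hc
  obtain ⟨K, hK⟩ : ∃ K : ℕ, c + (2 : ℝ≥0∞)⁻¹ ^ K < 1 := by
    have h0 : Tendsto (fun K : ℕ => c + (2 : ℝ≥0∞)⁻¹ ^ K) atTop (nhds (c + 0)) :=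
      tendsto_const_nhds.add (ENNReal.tendsto_pow_atTop_nhds_zero_of_lt_one (by norm_num))
    rw [add_zero] at h0
    exact (h0.eventually_lt_const hlt).exists
  have hchoice : ∀ i : ℕ, ∃ (w : ℕ → Bool) (m : ℕ), t i ⊆ PiNat.cylinder w m ∧
      (2 : ℝ≥0∞)⁻¹ ^ m ≤ (⨆ _ : (t i).Nonempty, EMetric.diam (t i)) + (2 : ℝ≥0∞)⁻¹ ^ (K + 1 + i) := by
    intro i
    rcases (t i).subsingleton_or_nontrivial with hs | hs
    · rcases hs.eq_empty_or_singleton with h | ⟨x, h⟩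
      · exact ⟨fun _ => false, K + 1 + i, by rw [h]; exact empty_subset _, le_add_self⟩
      · refine ⟨x, K + 1 + i, by rw [h]; simp [PiNat.self_mem_cylinder], le_add_self⟩
    · obtain ⟨w, m, h1, h2⟩ := subset_cylinder_of_nontrivial hs
      refine ⟨w, m, h1, ?_⟩
      rw [iSup_pos hs.nonempty]
      exact le_trans h2 le_self_add
  choose w l hsub hlen using hchoice
  have hcov2 : (univ : Set (ℕ → Bool)) ⊆ ⋃ i, PiNat.cylinder (w i) (l i) :=
    hcov.trans (iUnion_mono hsub)
  obtain ⟨s, hs⟩ := isCompact_univ.elim_finite_subcover (fun i => PiNat.cylinder (w i) (l i))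
    (fun i => PiNat.isOpen_cylinder (E := fun _ => Bool) _ _) hcov2
  have h1 : (1 : ℝ≥0∞) ≤ ∑ i ∈ s, (2 : ℝ≥0∞)⁻¹ ^ (l i) := finite_count s w l hs
  have h2 : ∑ i ∈ s, (2 : ℝ≥0∞)⁻¹ ^ (l i) ≤ ∑' i, (2 : ℝ≥0∞)⁻¹ ^ (l i) :=
    ENNReal.sum_le_tsum s
  have hgeom : ∑' i : ℕ, (2 : ℝ≥0∞)⁻¹ ^ (K + 1 + i) = (2 : ℝ≥0∞)⁻¹ ^ K := by
    have : ∀ i : ℕ, (2 : ℝ≥0∞)⁻¹ ^ (K + 1 + i) = (2 : ℝ≥0∞)⁻¹ ^ (K + 1) * (2 : ℝ≥0∞)⁻¹ ^ i :=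
      fun i => pow_add _ _ _
    rw [tsum_congr this, ENNReal.tsum_mul_left, ENNReal.tsum_geometric,
      ENNReal.one_sub_inv_two, inv_inv, pow_succ, mul_assoc,
      ENNReal.inv_mul_cancel two_ne_zero ENNReal.ofNat_ne_top, mul_one]
  have h3 : ∑' i, (2 : ℝ≥0∞)⁻¹ ^ (l i) ≤ c + (2 : ℝ≥0∞)⁻¹ ^ K := by
    calc ∑' i, (2 : ℝ≥0∞)⁻¹ ^ (l i)
        ≤ ∑' i, ((⨆ _ : (t i).Nonempty, EMetric.diam (t i)) + (2 : ℝ≥0∞)⁻¹ ^ (K + 1 + i)) :=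
          ENNReal.tsum_le_tsum hlen
      _ = c + ∑' i : ℕ, (2 : ℝ≥0∞)⁻¹ ^ (K + 1 + i) := ENNReal.tsum_add
      _ = c + (2 : ℝ≥0∞)⁻¹ ^ K := by rw [hgeom]
  exact absurd (h1.trans (h2.trans h3)) (not_le.2 hK)

lemma one_le_H : 1 ≤ hMeas (fun r => r) (univ : Set (ℕ → Bool)) := by
  rw [hMeas_eq, Measure.mkMetric_apply]
  refine le_trans ?_ (le_iSup₂ (f := fun r (_ : 0 < r) => ⨅ (t : ℕ → Set (ℕ → Bool))
    (_ : univ ⊆ iUnion t) (_ : ∀ n, EMetric.diam (t n) ≤ r),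
    ∑' n, ⨆ _ : (t n).Nonempty, gauge (EMetric.diam (t n))) 1 one_pos)
  refine le_iInf fun t => le_iInf fun hcov => le_iInf fun _ => ?_
  have := tsum_diam_ge t hcov
  rwa [show (∑' n, ⨆ _ : (t n).Nonempty, gauge (EMetric.diam (t n)))
    = ∑' n, ⨆ _ : (t n).Nonempty, EMetric.diam (t n) from
    tsum_congr fun n => by rw [gauge_diam]]

lemma H_univ : hMeas (fun r => r) (univ : Set (ℕ → Bool)) = 1 := by
  refine le_antisymm ?_ one_le_H
  have := H_cylinder_le (fun _ => false) 0
  rwa [PiNat.cylinder_zero, pow_zero] at this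

/-- the collection of cylinder sets -/
def C : Set (Set (ℕ → Bool)) := {S | ∃ z n, S = PiNat.cylinder z n}

lemma isPiSystem_C : IsPiSystem C := by
  rintro S1 ⟨z1, n1, rfl⟩ S2 ⟨z2, n2, rfl⟩ ⟨x, hx1, hx2⟩
  have key : ∀ (w1 : ℕ → Bool) (m1 : ℕ) (w2 : ℕ → Bool) (m2 : ℕ), m1 ≤ m2 →
      x ∈ PiNat.cylinder w1 m1 → x ∈ PiNat.cylinder w2 m2 →
      PiNat.cylinder w1 m1 ∩ PiNat.cylinder w2 m2 = PiNat.cylinder x m2 := by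
    intro w1 m1 w2 m2 h hx1 hx2
    rw [PiNat.mem_cylinder_iff] at hx1 hx2
    ext y
    simp only [mem_inter_iff, PiNat.mem_cylinder_iff]
    constructor
    · rintro ⟨h1, h2⟩ i hi
      rw [h2 i hi, ← hx2 i hi]
    · intro hy
      exact ⟨fun i hi => by rw [hy i (lt_of_lt_of_le hi h), hx1 i hi],
        fun i hi => by rw [hy i hi, hx2 i hi]⟩
  rcases le_total n1 n2 with h | h
  · rw [key z1 n1 z2 n2 h hx1 hx2]
    exact ⟨x, n2, rfl⟩
  · rw [inter_comm, key z2 n2 z1 n1 h hx2 hx1]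
    exact ⟨x, n1, rfl⟩

lemma generateFrom_C : (inferInstance : MeasurableSpace (ℕ → Bool))
    = MeasurableSpace.generateFrom C := by
  refine le_antisymm ?_ ?_
  · -- pi ≤ generateFrom C
    rw [show (inferInstance : MeasurableSpace (ℕ → Bool)) = MeasurableSpace.pi from rfl]
    refine iSup_le fun i => ?_
    rw [MeasurableSpace.comap_le_iff_le_map]
    intro u _
    suffices h : ∀ b : Bool, MeasurableSet[MeasurableSpace.generateFrom C]
        {x : ℕ → Bool | x i = b} by
      have heq : (fun x : ℕ → Bool => x i) ⁻¹' u = ⋃ b ∈ u, {x : ℕ → Bool | x i = b} := by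
        ext x; simp
      have : MeasurableSet[MeasurableSpace.generateFrom C]
          ((fun x : ℕ → Bool => x i) ⁻¹' u) := by
        rw [heq]
        exact MeasurableSet.biUnion u.to_countable fun b _ => h b
      exact this
    intro b
    have heq : {x : ℕ → Bool | x i = b} =
        ⋃ (p : {p : Fin (i + 1) → Bool // p ⟨i, Nat.lt_succ_self i⟩ = b}),
          PiNat.cylinder (ext0 (i + 1) p.1) (i + 1) := by
      ext x
      simp only [mem_setOf_eq, mem_iUnion, PiNat.mem_cylinder_iff]
      constructor
      · intro hx
        refine ⟨⟨fun j => x j, hx⟩, fun j hj => ?_⟩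
        rw [ext0_lt _ hj]
      · rintro ⟨⟨p, hp⟩, hmem⟩
        have := hmem i (Nat.lt_succ_self i)
        rw [ext0_lt _ (Nat.lt_succ_self i)] at this
        rw [this]
        exact hp
    rw [heq]
    exact MeasurableSet.iUnion fun p =>
      MeasurableSpace.measurableSet_generateFrom ⟨_, _, rfl⟩
  · -- generateFrom C ≤ pi
    refine MeasurableSpace.generateFrom_le ?_
    rintro S ⟨z, n, rfl⟩
    have : PiNat.cylinder z n = ⋂ (i : ℕ) (_ : i < n), {y : ℕ → Bool | y i = z i} := by
      ext y
      simp [PiNat.mem_cylinder_iff]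
    rw [this]
    refine MeasurableSet.iInter fun i => MeasurableSet.iInter fun _ => ?_
    have : {y : ℕ → Bool | y i = z i} = (fun y : ℕ → Bool => y i) ⁻¹' {z i} := rfl
    rw [this]
    exact measurable_pi_apply i (measurableSet_singleton (z i))

end CantorH1

/-- In Cantor space with the metric `d(x,y) = 2^{-min{i : x i ≠ y i}}`, the 1-dimensional
Hausdorff measure of the whole space is 1, and `H^1` coincides on Borel sets with the
product (coin-flipping) measure, i.e. with any measure giving each cylinder of length `n`
measure `2^{-n}`. -/
theorem stmt8 :
    hMeas (fun r => r) (Set.univ : Set (ℕ → Bool)) = 1 ∧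
    ∀ μ : Measure (ℕ → Bool),
      (∀ (n : ℕ) (p : Fin n → Bool), μ {x | ∀ i : Fin n, x i = p i} = 1 / 2 ^ n) →
      ∀ S : Set (ℕ → Bool), MeasurableSet S → hMeas (fun r => r) S = μ S := by
  refine ⟨CantorH1.H_univ, ?_⟩
  intro μ Hμ S _
  have hμuniv : μ univ = 1 := by
    have h0 := Hμ 0 (fun i => i.elim0)
    have huniv : {x : ℕ → Bool | ∀ i : Fin 0, x i = i.elim0} = univ := by
      ext x; simp
    rw [huniv] at h0
    simpa using h0
  have hle := CantorH1.le_H μ Hμ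
  have hcyl : ∀ S ∈ CantorH1.C, hMeas (fun r => r) S = μ S := by
    rintro S ⟨z, n, rfl⟩
    refine le_antisymm ?_ (hle _)
    rw [CantorH1.measure_cylinder μ Hμ]
    exact CantorH1.H_cylinder_le z n
  haveI hfin : IsFiniteMeasure (hMeas (fun r => r) : Measure (ℕ → Bool)) :=
    ⟨by rw [CantorH1.H_univ]; exact one_lt_top⟩
  have hext : (hMeas (fun r => r) : Measure (ℕ → Bool)) = μ :=
    ext_of_generate_finite CantorH1.C CantorH1.generateFrom_C CantorH1.isPiSystem_C hcyl
      (by rw [CantorH1.H_univ, hμuniv])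
  rw [hext]
end

section
/- If E ⊆ 2^ℕ is a closed set with H^1(E) = 0 (in the metric d(x,y) = 2^{-min{i: x(i)≠y(i)}}), then limsup_{r→0} N_E(r)·r = 0, where N_E(r) is the minimal number of sets of diameter at most r needed to cover E. -/
open Set Filter MeasureTheory ENNReal

/-- Covering number: least number of sets of diameter at most `δ` covering `E`. -/
noncomputable def covNum {X : Type*} [EMetricSpace X] (E : Set X) (δ : ℝ≥0∞) : ℕ∞ :=
  sInf ((fun 𝒰 : Finset (Set X) => (𝒰.card : ℕ∞)) ''
    {𝒰 | (E ⊆ ⋃ U ∈ 𝒰, U) ∧ ∀ U ∈ 𝒰, EMetric.diam U ≤ δ})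

/-- Upper box premeasure `B₀^g(E) = limsup_{r→0+} N_E(r)·g(r)`. -/
noncomputable def ubox0 {X : Type*} [EMetricSpace X] (E : Set X) (g : ℝ → ℝ) : ℝ≥0∞ :=
  Filter.limsup (fun r : ℝ => (covNum E (ENNReal.ofReal r) : ℝ≥0∞) * ENNReal.ofReal (g r))
    (nhdsWithin 0 (Set.Ioi 0))

lemma ofReal_half_pow (m : ℕ) : ENNReal.ofReal ((1/2:ℝ)^m) = (2⁻¹ : ℝ≥0∞)^m := by
  rw [ENNReal.ofReal_pow (by norm_num), one_div,
    ENNReal.ofReal_inv_of_pos (by norm_num), ENNReal.ofReal_ofNat]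

lemma diam_cylinder_le (x : ℕ → Bool) (n : ℕ) :
    EMetric.diam (PiNat.cylinder x n) ≤ (2⁻¹ : ℝ≥0∞)^n := by
  rw [← ofReal_half_pow]
  apply EMetric.diam_le
  intro y hy z hz
  rw [edist_dist]
  apply ENNReal.ofReal_le_ofReal
  have hz' : z ∈ PiNat.cylinder y n := by
    rw [PiNat.mem_cylinder_iff]
    intro i hi
    rw [PiNat.mem_cylinder_iff.1 hz i hi, PiNat.mem_cylinder_iff.1 hy i hi]
  rw [dist_comm]
  exact PiNat.mem_cylinder_iff_dist_le.1 hz'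

lemma subset_cylinder {S : Set (ℕ → Bool)} {p : ℕ → Bool} (hp : p ∈ S) {k : ℕ}
    (hd : EMetric.diam S ≤ (2⁻¹:ℝ≥0∞)^k) : S ⊆ PiNat.cylinder p k := by
  intro y hy
  rw [PiNat.mem_cylinder_iff_dist_le]
  have h1 : edist y p ≤ (2⁻¹:ℝ≥0∞)^k := (EMetric.edist_le_diam_of_mem hy hp).trans hd
  rw [← ofReal_half_pow, edist_dist] at h1
  exact (ENNReal.ofReal_le_ofReal_iff (by positivity)).1 h1

open Classical in
noncomputable def splitCyl (x : ℕ → Bool) (k m : ℕ) : Finset (Set (ℕ → Bool)) :=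
  (Finset.univ : Finset (Fin (m - k) → Bool)).image
    (fun w => PiNat.cylinder (fun i => if i < k then x i else
       if h2 : i - k < m - k then w ⟨i - k, h2⟩ else false) m)

lemma splitCyl_card (x : ℕ → Bool) (k m : ℕ) : (splitCyl x k m).card ≤ 2^(m-k) := by
  classical
  rw [splitCyl]
  refine Finset.card_image_le.trans ?_
  simp [Finset.card_univ]

lemma splitCyl_mem {x : ℕ → Bool} {k m : ℕ} {U : Set (ℕ → Bool)} (hU : U ∈ splitCyl x k m) :
    ∃ z, U = PiNat.cylinder z m := by
  classical
  rw [splitCyl, Finset.mem_image] at hU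
  obtain ⟨w, -, rfl⟩ := hU
  exact ⟨_, rfl⟩

lemma splitCyl_cover (x : ℕ → Bool) (k m : ℕ) :
    PiNat.cylinder x k ⊆ ⋃ U ∈ splitCyl x k m, U := by
  classical
  intro y hy
  set w : Fin (m-k) → Bool := fun j => y (k + j) with hw
  refine mem_iUnion₂.2 ⟨_, by rw [splitCyl]; exact Finset.mem_image.2 ⟨w, Finset.mem_univ _, rfl⟩, ?_⟩
  rw [PiNat.mem_cylinder_iff]
  intro i hi
  by_cases hik : i < k
  · rw [if_pos hik]
    exact PiNat.mem_cylinder_iff.1 hy i hik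
  · have hk : k ≤ i := le_of_not_gt hik
    have h2 : i - k < m - k := Nat.sub_lt_sub_right hk hi
    rw [if_neg hik, dif_pos h2, hw]
    simp only
    congr 1
    omega

lemma covNum_le {E : Set (ℕ → Bool)} {δ : ℝ≥0∞} {𝒰 : Finset (Set (ℕ → Bool))}
    (hcov : E ⊆ ⋃ U ∈ 𝒰, U) (hd : ∀ U ∈ 𝒰, EMetric.diam U ≤ δ) :
    covNum E δ ≤ (𝒰.card : ℕ∞) :=
  sInf_le ⟨𝒰, ⟨hcov, hd⟩, rfl⟩

lemma pow_pred_eq {j : ℕ} (hj : j ≠ 0) : (2⁻¹:ℝ≥0∞)^(j-1) = 2 * 2⁻¹^j := by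
  conv_rhs => rw [← Nat.sub_add_cancel (Nat.one_le_iff_ne_zero.2 hj)]
  rw [pow_succ', ← mul_assoc, ENNReal.mul_inv_cancel two_ne_zero (by norm_num), one_mul]

lemma two_pow_mul_inv_pow {k m : ℕ} (hkm : k ≤ m) :
    (2:ℝ≥0∞)^(m-k) * 2⁻¹^m = 2⁻¹^k := by
  calc (2:ℝ≥0∞)^(m-k) * 2⁻¹^m = 2^(m-k) * (2⁻¹^(m-k) * 2⁻¹^k) := by
        rw [← pow_add, Nat.sub_add_cancel hkm]
    _ = (2*2⁻¹)^(m-k) * 2⁻¹^k := by rw [mul_pow, mul_assoc]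
    _ = 2⁻¹^k := by
        rw [ENNReal.mul_inv_cancel two_ne_zero (by norm_num), one_pow, one_mul]

/-- A closed subset of Cantor space of `H^1`-measure zero has vanishing upper box
premeasure `limsup_{r→0} N_E(r)·r`. -/
theorem stmt9 (E : Set (ℕ → Bool)) (hE : IsClosed E)
    (h0 : hMeas (fun r => r) E = 0) :
    ubox0 E (fun r => r) = 0 := by
  classical
  have main : ∀ ε : NNReal, 0 < ε → ubox0 E (fun r => r) ≤ (ε : ℝ≥0∞) := by
    intro ε hε
    set ζ : ℝ≥0∞ := (ε : ℝ≥0∞) / 8 with hζdef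
    have hζ0 : ζ ≠ 0 := by
      simp [hζdef, ENNReal.div_ne_zero, hε.ne']
    -- extract a cover from the vanishing Hausdorff measure
    simp only [hMeas] at h0
    rw [Measure.mkMetric_apply] at h0
    have h0' := h0
    have h1 : (⨅ (t : ℕ → Set (ℕ → Bool)) (_ : E ⊆ iUnion t)
        (_ : ∀ n, EMetric.diam (t n) ≤ 1),
        ∑' n, ⨆ _ : (t n).Nonempty,
          ENNReal.ofReal ((EMetric.diam (t n)).toReal)) = 0 := by
      refine le_antisymm ?_ zero_le
      rw [← h0']
      exact le_iSup₂ (f := fun r (_ : 0 < r) =>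
        ⨅ (t : ℕ → Set (ℕ → Bool)) (_ : E ⊆ iUnion t)
          (_ : ∀ n, EMetric.diam (t n) ≤ r),
          ∑' n, ⨆ _ : (t n).Nonempty,
            ENNReal.ofReal ((EMetric.diam (t n)).toReal)) 1 one_pos
    have hlt : (⨅ (t : ℕ → Set (ℕ → Bool)) (_ : E ⊆ iUnion t)
        (_ : ∀ n, EMetric.diam (t n) ≤ 1),
        ∑' n, ⨆ _ : (t n).Nonempty,
          ENNReal.ofReal ((EMetric.diam (t n)).toReal)) < ζ := by
      rw [h1]; exact pos_iff_ne_zero.2 hζ0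
    obtain ⟨t, ht⟩ := iInf_lt_iff.1 hlt
    obtain ⟨hcov, ht⟩ := iInf_lt_iff.1 ht
    obtain ⟨hdiam, hsum⟩ := iInf_lt_iff.1 ht
    -- sum of diameters
    have hDne : ∀ n, EMetric.diam (t n) ≠ ⊤ :=
      fun n => ((hdiam n).trans_lt one_lt_top).ne
    have hDsum : ∑' n, EMetric.diam (t n) ≤ ζ := by
      refine le_trans (ENNReal.tsum_le_tsum fun n => ?_) hsum.le
      rcases (t n).eq_empty_or_nonempty with he | hne
      · simp [he, EMetric.diam]
      · rw [iSup_pos hne, ENNReal.ofReal_toReal (hDne n)]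
    obtain ⟨K, hK⟩ := ENNReal.exists_inv_two_pow_lt hζ0
    -- replace each set by a cylinder
    have choice : ∀ n, ∃ (c : ℕ → Bool) (k : ℕ),
        t n ⊆ PiNat.cylinder c k ∧
        (2⁻¹:ℝ≥0∞)^k ≤ 2 * EMetric.diam (t n) + 2⁻¹^(n+K) := by
      intro n
      rcases (t n).eq_empty_or_nonempty with he | ⟨p, hp⟩
      · exact ⟨fun _ => false, n+K, by simp [he], by rw [pow_add]; exact le_add_self⟩
      · by_cases hD : EMetric.diam (t n) = 0
        · refine ⟨p, n+K, subset_cylinder hp (by rw [hD]; exact zero_le), ?_⟩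
          rw [pow_add]; exact le_add_self
        · obtain ⟨j, hj⟩ := ENNReal.exists_inv_two_pow_lt hD
          have hex : ∃ j, (2⁻¹:ℝ≥0∞)^j < EMetric.diam (t n) := ⟨j, by simpa using hj⟩
          set j₀ := Nat.find hex with hj₀def
          have hj₀ : (2⁻¹:ℝ≥0∞)^j₀ < EMetric.diam (t n) := Nat.find_spec hex
          have hj₀0 : j₀ ≠ 0 := by
            intro h
            rw [h, pow_zero] at hj₀
            exact absurd (hdiam n) (not_le.2 hj₀)
          have hmin : ¬ ((2⁻¹:ℝ≥0∞)^(j₀-1) < EMetric.diam (t n)) :=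
            Nat.find_min hex (Nat.sub_lt (Nat.pos_of_ne_zero hj₀0) one_pos)
          refine ⟨p, j₀ - 1, subset_cylinder hp (not_lt.1 hmin), ?_⟩
          rw [pow_pred_eq hj₀0]
          calc 2 * (2⁻¹:ℝ≥0∞)^j₀ ≤ 2 * EMetric.diam (t n) :=
                mul_le_mul_right hj₀.le 2
            _ ≤ 2 * EMetric.diam (t n) + 2⁻¹^(n+K) := le_self_add
    choose c k hsub hk using choice
    -- sum over the cylinder scales
    have hksum : ∑' n, (2⁻¹:ℝ≥0∞)^(k n) ≤ 2 * ζ + ζ * 2 := by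
      calc ∑' n, (2⁻¹:ℝ≥0∞)^(k n)
          ≤ ∑' n, (2 * EMetric.diam (t n) + 2⁻¹^(n+K)) := ENNReal.tsum_le_tsum hk
        _ = 2 * (∑' n, EMetric.diam (t n)) + ∑' n, (2⁻¹:ℝ≥0∞)^(n+K) := by
            rw [ENNReal.tsum_add, ENNReal.tsum_mul_left]
        _ = 2 * (∑' n, EMetric.diam (t n)) + 2⁻¹^K * 2 := by
            congr 1
            simp only [pow_add]
            rw [ENNReal.tsum_mul_right, ENNReal.tsum_geometric]
            norm_num [mul_comm]
        _ ≤ 2 * ζ + ζ * 2 := by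
            gcongr
    -- compact exhaustion
    have hcomp : IsCompact E := hE.isCompact
    have hcov2 : E ⊆ ⋃ n, PiNat.cylinder (c n) (k n) :=
      hcov.trans (iUnion_mono hsub)
    obtain ⟨F, hF⟩ := hcomp.elim_finite_subcover _
      (fun n => PiNat.isOpen_cylinder (E := fun _ => Bool) (c n) (k n)) hcov2
    set M := F.sup k with hM
    -- the eventual bound
    have hev : ∀ r : ℝ, r ∈ Set.Ioo (0:ℝ) ((1/2)^(M + 1)) →
        (covNum E (ENNReal.ofReal r) : ℝ≥0∞) * ENNReal.ofReal r ≤ (ε : ℝ≥0∞) := by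
      rintro r ⟨hr0, hrδ⟩
      have hex : ∃ j, (1/2:ℝ)^j < r := exists_pow_lt_of_lt_one hr0 (by norm_num)
      set m := Nat.find hex with hmdef
      have hm : (1/2:ℝ)^m < r := Nat.find_spec hex
      have hr1 : r < 1 := hrδ.trans_le (pow_le_one₀ (by norm_num) (by norm_num))
      have hm0 : m ≠ 0 := by
        intro h
        rw [h, pow_zero] at hm
        exact absurd hr1 (not_lt.2 hm.le)
      have hrm : r ≤ (1/2:ℝ)^(m-1) :=
        not_lt.1 (Nat.find_min hex (Nat.sub_lt (Nat.pos_of_ne_zero hm0) one_pos))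
      have hMm : ∀ n ∈ F, k n ≤ m := by
        intro n hn
        have h1 : (1/2:ℝ)^m < (1/2)^(M+1) := hm.trans hrδ
        have h2 : M + 1 < m :=
          (pow_lt_pow_iff_right_of_lt_one₀ (by norm_num) (by norm_num)).1 h1
        exact (Finset.le_sup hn).trans (by omega)
      set 𝒰 : Finset (Set (ℕ → Bool)) := F.biUnion (fun n => splitCyl (c n) (k n) m) with h𝒰
      have hUcov : E ⊆ ⋃ U ∈ 𝒰, U := by
        intro y hy
        obtain ⟨n, hnF, hyn⟩ := mem_iUnion₂.1 (hF hy)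
        obtain ⟨U, hU, hyU⟩ := mem_iUnion₂.1 (splitCyl_cover (c n) (k n) m hyn)
        exact mem_iUnion₂.2 ⟨U, Finset.mem_biUnion.2 ⟨n, hnF, hU⟩, hyU⟩
      have hUd : ∀ U ∈ 𝒰, EMetric.diam U ≤ ENNReal.ofReal r := by
        intro U hU
        obtain ⟨n, hn, hU'⟩ := Finset.mem_biUnion.1 hU
        obtain ⟨z, rfl⟩ := splitCyl_mem hU'
        refine (diam_cylinder_le z m).trans ?_
        rw [← ofReal_half_pow]
        exact ENNReal.ofReal_le_ofReal hm.le
      have hcard : (covNum E (ENNReal.ofReal r) : ℝ≥0∞) ≤ (𝒰.card : ℝ≥0∞) := by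
        have h := covNum_le hUcov hUd
        exact_mod_cast ENat.toENNReal_le.2 h
      have hcard2 : (𝒰.card : ℝ≥0∞) ≤ ∑ n ∈ F, (2:ℝ≥0∞)^(m - k n) := by
        calc (𝒰.card : ℝ≥0∞)
            ≤ ((∑ n ∈ F, (splitCyl (c n) (k n) m).card : ℕ) : ℝ≥0∞) := by
              exact_mod_cast Finset.card_biUnion_le
          _ = ∑ n ∈ F, (((splitCyl (c n) (k n) m).card : ℕ) : ℝ≥0∞) := by push_cast; ring
          _ ≤ ∑ n ∈ F, (2:ℝ≥0∞)^(m - k n) := by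
              refine Finset.sum_le_sum fun n _ => ?_
              exact_mod_cast splitCyl_card (c n) (k n) m
      have hrle : ENNReal.ofReal r ≤ 2 * (2⁻¹:ℝ≥0∞)^m := by
        calc ENNReal.ofReal r ≤ ENNReal.ofReal ((1/2:ℝ)^(m-1)) :=
              ENNReal.ofReal_le_ofReal hrm
          _ = (2⁻¹:ℝ≥0∞)^(m-1) := ofReal_half_pow _
          _ = 2 * 2⁻¹^m := pow_pred_eq hm0
      calc (covNum E (ENNReal.ofReal r) : ℝ≥0∞) * ENNReal.ofReal r
          ≤ (∑ n ∈ F, (2:ℝ≥0∞)^(m - k n)) * (2 * 2⁻¹^m) :=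
            mul_le_mul' (hcard.trans hcard2) hrle
        _ = ∑ n ∈ F, (2:ℝ≥0∞)^(m - k n) * (2 * 2⁻¹^m) := Finset.sum_mul _ _ _
        _ = ∑ n ∈ F, 2 * (2⁻¹:ℝ≥0∞)^(k n) := by
            refine Finset.sum_congr rfl fun n hn => ?_
            rw [← two_pow_mul_inv_pow (hMm n hn)]
            ring
        _ = 2 * ∑ n ∈ F, (2⁻¹:ℝ≥0∞)^(k n) := (Finset.mul_sum _ _ _).symm
        _ ≤ 2 * ∑' n, (2⁻¹:ℝ≥0∞)^(k n) := by
            gcongr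
            exact ENNReal.sum_le_tsum F
        _ ≤ 2 * (2 * ζ + ζ * 2) := by gcongr
        _ = 8 * ζ := by ring
        _ = (ε : ℝ≥0∞) := ENNReal.mul_div_cancel' (by norm_num) (by norm_num)
    -- conclude the limsup bound
    have hevent : ∀ᶠ r in nhdsWithin (0:ℝ) (Set.Ioi 0),
        (covNum E (ENNReal.ofReal r) : ℝ≥0∞) * ENNReal.ofReal r ≤ (ε : ℝ≥0∞) := by
      filter_upwards [Ioo_mem_nhdsGT_of_mem
        (⟨le_rfl, by positivity⟩ : (0:ℝ) ∈ Set.Ico 0 ((1/2)^(M+1)))] with r hr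
      exact hev r hr
    exact limsup_le_of_le (by isBoundedDefault) hevent
  refine le_antisymm ?_ zero_le
  refine ENNReal.le_of_forall_pos_le_add fun ε hε _ => ?_
  simpa using main ε hε
end

section
/- If X is a strong measure zero metric space and Y is a metric space such that for every ε > 0 there is a finite cover {U_1,…,U_N} of Y with Σ_i h(diam U_i) < ε (i.e. the upper Hausdorff premeasure of Y is zero), then H^h(X × Y) = 0, where X × Y carries the maximum metric. -/
open Set Filter MeasureTheory ENNReal
open Topology

theorem diam_prod_le {X Y : Type*} [PseudoEMetricSpace X] [PseudoEMetricSpace Y]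
    (s : Set X) (u : Set Y) :
    EMetric.diam (s ×ˢ u) ≤ max (EMetric.diam s) (EMetric.diam u) := by
  apply EMetric.diam_le
  rintro ⟨x₁, y₁⟩ ⟨hx₁, hy₁⟩ ⟨x₂, y₂⟩ ⟨hx₂, hy₂⟩
  rw [Prod.edist_eq]
  exact max_le_max (EMetric.edist_le_diam_of_mem hx₁ hx₂)
    (EMetric.edist_le_diam_of_mem hy₁ hy₂)

/-- If `X` has strong measure zero and the upper Hausdorff premeasure of `Y` with gauge `h`
is zero (for all `δ, ε > 0` there is a finite `δ`-cover with Hausdorff sum `< ε`), then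
`H^h(X × Y) = 0`, the product carrying the maximum metric. -/
theorem stmt12 {X Y : Type*} [MetricSpace X] [MetricSpace Y]
    [MeasurableSpace (X × Y)] [BorelSpace (X × Y)]
    (h : ℝ → ℝ) (hh : IsHausdorffFn h) (hX : SMZ X)
    (hY : ∀ δ > (0 : ℝ), ∀ ε > (0 : ℝ), ∃ 𝒰 : Finset (Set Y),
      (∀ y : Y, ∃ U ∈ 𝒰, y ∈ U) ∧
      (∀ U ∈ 𝒰, EMetric.diam U ≤ ENNReal.ofReal δ) ∧
      ∑ U ∈ 𝒰, h (Metric.diam U) < ε) :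
    hMeas h (Set.univ : Set (X × Y)) = 0 := by
  rcases isEmpty_or_nonempty Y with hE | hNE
  · have hXY : IsEmpty (X × Y) := ⟨fun p => hE.elim p.2⟩
    rw [Set.univ_eq_empty_iff.2 hXY]
    exact measure_empty
  obtain ⟨hpos, hmono, hcont, hzero⟩ := hh
  -- stage constants
  set D : ℕ → ℝ := fun j => 1 / (j + 1) with hD
  have hDpos : ∀ j, 0 < D j := fun j => by positivity
  set B : ℕ → ℕ → ℝ := fun j n => (1 / 2) ^ j * (1 / 2) ^ (n + 1) with hB
  have hBpos : ∀ j n, 0 < B j n := fun j n => by positivity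
  -- covers of Y
  have main : ∀ j n : ℕ, ∃ 𝒰 : Finset (Set Y),
      (∀ y, ∃ U ∈ 𝒰, y ∈ U) ∧ (∀ U ∈ 𝒰, EMetric.diam U ≤ ENNReal.ofReal (D j / 2)) ∧
      ∑ U ∈ 𝒰, h (Metric.diam U) < B j n :=
    fun j n => hY (D j / 2) (by positivity) (B j n) (hBpos j n)
  choose 𝒰 hcov hdiamY hsum using main
  have h𝒰ne : ∀ j n, (𝒰 j n).Nonempty := fun j n =>
    let ⟨U, hU, _⟩ := hcov j n (Classical.arbitrary Y); ⟨U, hU⟩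
  have hcard : ∀ j n, (0 : ℝ) < (𝒰 j n).card := fun j n => by
    exact_mod_cast Finset.card_pos.2 (h𝒰ne j n)
  have hdiamY' : ∀ j n U, U ∈ 𝒰 j n → Metric.diam U ≤ D j / 2 := fun j n U hU =>
    ENNReal.toReal_le_of_le_ofReal (by positivity) (hdiamY j n U hU)
  -- enlargement of diameters, using right-continuity
  have enlarge : ∀ j n (U : Set Y), ∃ dd : ℝ, 0 < dd ∧ dd ≤ D j ∧
      (U ∈ 𝒰 j n → Metric.diam U < dd ∧
        h dd ≤ h (Metric.diam U) + B j n / (𝒰 j n).card) := by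
    intro j n U
    by_cases hU : U ∈ 𝒰 j n
    · set a := Metric.diam U with ha
      have ha0 : 0 ≤ a := Metric.diam_nonneg
      have haD : a ≤ D j / 2 := hdiamY' j n U hU
      have hη : (0 : ℝ) < B j n / (𝒰 j n).card := div_pos (hBpos j n) (hcard j n)
      have hct := hcont a ha0
      have hs : {x | h x < h a + B j n / (𝒰 j n).card} ∈ 𝓝[Set.Ici a] a :=
        hct (Iio_mem_nhds (by linarith))
      have hs' : {x | h x < h a + B j n / (𝒰 j n).card} ∈ 𝓝[Set.Ioi a] a :=
        nhdsWithin_mono a Set.Ioi_subset_Ici_self hs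
      have hIoc : Set.Ioc a (a + D j / 2) ∈ 𝓝[Set.Ioi a] a :=
        Ioc_mem_nhdsGT_of_mem ⟨le_rfl, by linarith [hDpos j]⟩
      obtain ⟨dd, hdd1, hdd2, hdd3⟩ := Filter.nonempty_of_mem (Filter.inter_mem hs' hIoc)
      exact ⟨dd, lt_of_le_of_lt ha0 hdd2, by linarith, fun _ => ⟨hdd2, hdd1.le⟩⟩
    · exact ⟨D j, hDpos j, le_rfl, fun hU' => absurd hU' hU⟩
  choose d hd0 hdD hdU using enlarge
  -- the strong-measure-zero covers of X
  set ε' : ℕ → ℕ → ℝ := fun j n => (𝒰 j n).inf' (h𝒰ne j n) (d j n) with hε'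
  have hε'pos : ∀ j n, 0 < ε' j n := fun j n =>
    (Finset.lt_inf'_iff _).2 fun U _ => hd0 j n U
  have hA : ∀ j, ∃ A : ℕ → Set X, (∀ x, ∃ n, x ∈ A n) ∧
      ∀ n, EMetric.diam (A n) ≤ ENNReal.ofReal (ε' j n) :=
    fun j => hX (ε' j) (hε'pos j)
  choose A hAcov hAdiam using hA
  -- key diameter bound for product pieces
  have hkey : ∀ j n U, U ∈ 𝒰 j n →
      EMetric.diam ((A j n) ×ˢ U) ≤ ENNReal.ofReal (d j n U) := by
    intro j n U hU
    refine (diam_prod_le _ _).trans (max_le ?_ ?_)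
    · exact (hAdiam j n).trans (ENNReal.ofReal_le_ofReal (Finset.inf'_le _ hU))
    · have hne : EMetric.diam U ≠ ⊤ :=
        ((hdiamY j n U hU).trans_lt ENNReal.ofReal_lt_top).ne
      calc EMetric.diam U = ENNReal.ofReal (Metric.diam U) :=
            (ENNReal.ofReal_toReal hne).symm
        _ ≤ ENNReal.ofReal (d j n U) :=
            ENNReal.ofReal_le_ofReal (hdU j n U hU).1.le
  -- the coverings of X × Y
  have hr : Tendsto (fun j => ENNReal.ofReal (D j)) atTop (𝓝 0) := by
    have h1 : Tendsto D atTop (𝓝 0) := tendsto_one_div_add_atTop_nhds_zero_nat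
    have h2 := (ENNReal.continuous_ofReal.tendsto 0).comp h1
    rwa [ENNReal.ofReal_zero] at h2
  have ht : ∀ᶠ j in atTop, ∀ i : (Σ n : ℕ, {U : Set Y // U ∈ 𝒰 j n}),
      EMetric.diam (A j i.1 ×ˢ (i.2 : Set Y)) ≤ ENNReal.ofReal (D j) := by
    refine Eventually.of_forall fun j => ?_
    rintro ⟨n, U, hU⟩
    exact (hkey j n U hU).trans (ENNReal.ofReal_le_ofReal (hdD j n U))
  have hst : ∀ᶠ j in atTop, (Set.univ : Set (X × Y)) ⊆
      ⋃ i : (Σ n : ℕ, {U : Set Y // U ∈ 𝒰 j n}), A j i.1 ×ˢ (i.2 : Set Y) := by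
    refine Eventually.of_forall fun j => ?_
    rintro ⟨x, y⟩ -
    obtain ⟨n, hx⟩ := hAcov j x
    obtain ⟨U, hU, hy⟩ := hcov j n y
    exact Set.mem_iUnion.2 ⟨⟨n, U, hU⟩, hx, hy⟩
  have hle := Measure.mkMetric_le_liminf_tsum (s := (Set.univ : Set (X × Y)))
      (l := Filter.atTop) (r := fun j => ENNReal.ofReal (D j)) hr
      (t := fun j (i : Σ n : ℕ, {U : Set Y // U ∈ 𝒰 j n}) => A j i.1 ×ˢ (i.2 : Set Y))
      ht hst (m := fun r => ENNReal.ofReal (h r.toReal))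
  -- bound each stage's sum
  have hbound : ∀ j, (∑' i : (Σ n : ℕ, {U : Set Y // U ∈ 𝒰 j n}),
      ENNReal.ofReal (h (EMetric.diam (A j i.1 ×ˢ (i.2 : Set Y))).toReal))
      ≤ ENNReal.ofReal ((1 / 2 : ℝ) ^ j) * 2 := by
    intro j
    rw [ENNReal.tsum_sigma']
    have inner : ∀ n, (∑' U : {U : Set Y // U ∈ 𝒰 j n},
        ENNReal.ofReal (h (EMetric.diam (A j n ×ˢ (U : Set Y))).toReal))
        ≤ ENNReal.ofReal ((1 / 2 : ℝ) ^ j) * ENNReal.ofReal ((1 / 2 : ℝ)) ^ n := by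
      intro n
      rw [Finset.tsum_subtype (𝒰 j n)
        (fun U => ENNReal.ofReal (h (EMetric.diam (A j n ×ˢ U)).toReal))]
      have step1 : ∑ U ∈ 𝒰 j n, ENNReal.ofReal (h (EMetric.diam (A j n ×ˢ U)).toReal)
          ≤ ∑ U ∈ 𝒰 j n, ENNReal.ofReal (h (Metric.diam U) + B j n / (𝒰 j n).card) := by
        refine Finset.sum_le_sum fun U hU => ENNReal.ofReal_le_ofReal ?_
        have hd1 : (EMetric.diam (A j n ×ˢ U)).toReal ≤ d j n U :=
          ENNReal.toReal_le_of_le_ofReal (hd0 j n U).le (hkey j n U hU)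
        have hd2 : (0:ℝ) ≤ (EMetric.diam (A j n ×ˢ U)).toReal := ENNReal.toReal_nonneg
        calc h (EMetric.diam (A j n ×ˢ U)).toReal ≤ h (d j n U) :=
              hmono hd2 (hd2.trans hd1) hd1
          _ ≤ h (Metric.diam U) + B j n / (𝒰 j n).card := (hdU j n U hU).2
      have step2 : ∑ U ∈ 𝒰 j n, ENNReal.ofReal (h (Metric.diam U) + B j n / (𝒰 j n).card)
          ≤ ENNReal.ofReal (2 * B j n) := by
        rw [← ENNReal.ofReal_sum_of_nonneg (fun U hU =>
          add_nonneg (hpos _ Metric.diam_nonneg)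
            (div_pos (hBpos j n) (hcard j n)).le)]
        refine ENNReal.ofReal_le_ofReal ?_
        rw [Finset.sum_add_distrib, Finset.sum_const, nsmul_eq_mul,
          mul_div_cancel₀ _ (ne_of_gt (hcard j n))]
        linarith [hsum j n]
      refine (step1.trans step2).trans ?_
      have : (2 : ℝ) * B j n = (1 / 2) ^ j * (1 / 2) ^ n := by
        rw [hB]; ring
      rw [this, ENNReal.ofReal_mul (by positivity), ENNReal.ofReal_pow (by norm_num),
        ENNReal.ofReal_pow (by norm_num)]
    calc (∑' n, ∑' U : {U : Set Y // U ∈ 𝒰 j n},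
        ENNReal.ofReal (h (EMetric.diam (A j n ×ˢ (U : Set Y))).toReal))
        ≤ ∑' n, ENNReal.ofReal ((1 / 2 : ℝ) ^ j) * ENNReal.ofReal ((1 / 2 : ℝ)) ^ n :=
          ENNReal.tsum_le_tsum inner
      _ = ENNReal.ofReal ((1 / 2 : ℝ) ^ j) * (1 - ENNReal.ofReal (1 / 2 : ℝ))⁻¹ := by
          rw [ENNReal.tsum_mul_left, ENNReal.tsum_geometric]
      _ = ENNReal.ofReal ((1 / 2 : ℝ) ^ j) * 2 := by
          norm_num [ENNReal.ofReal_div_of_pos]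
  have htends : Tendsto (fun j => ENNReal.ofReal ((1 / 2 : ℝ) ^ j) * 2) atTop (𝓝 0) := by
    have h1 : Tendsto (fun j : ℕ => ((1 / 2 : ℝ)) ^ j) atTop (𝓝 0) :=
      tendsto_pow_atTop_nhds_zero_of_lt_one (by norm_num) (by norm_num)
    have h2 := (ENNReal.continuous_ofReal.tendsto 0).comp h1
    rw [ENNReal.ofReal_zero] at h2
    simpa using ENNReal.Tendsto.mul_const h2 (Or.inr (by norm_num))
  refine le_zero_iff.1 ?_
  calc hMeas h (Set.univ : Set (X × Y))
      ≤ liminf (fun j => ∑' i : (Σ n : ℕ, {U : Set Y // U ∈ 𝒰 j n}),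
          ENNReal.ofReal (h (EMetric.diam (A j i.1 ×ˢ (i.2 : Set Y))).toReal)) atTop := hle
    _ ≤ liminf (fun j => ENNReal.ofReal ((1 / 2 : ℝ) ^ j) * 2) atTop :=
        liminf_le_liminf (Eventually.of_forall hbound)
    _ = 0 := htends.liminf_eq
end
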